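/- arXiv:1803.10634 — 3 statements merged into one kernel-verified Lean document; each statement's English description precedes it below -/
import Mathlib

section
/- Let H = ∗_{a∈A} H_a be a nontrivial free product and let w_1, w_2 ∈ H be cyclically reduced words with |w_1|_c ≥ 2 and |w_2|_c ≥ 2. If a word U is a subword both of w_1^{k_1} and of w_2^{k_2} for some positive integers k_1, k_2, and |U| ≥ |w_1|_r + |w_2|_r − gcd(|w_1|_r, |w_2|_r), then there exist reduced words C_1, C_2 ∈ H such that w_1 ≡ (C_1 · C_2)^{m_1} and w_2 ≡ (C_2 · C_1)^{m_2} for some positive integers m_1, m_2. -/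
/-!
Common definitions: we model a nontrivial free product `H = ∗_{a ∈ A} H_a` as
`Monoid.CoprodI G` for a family of groups `G : ι → Type*` with `[Nontrivial ι]`
(the index set has at least two elements) and `∀ i, Nontrivial (G i)`
(all factors are nontrivial groups).
-/

namespace FreeProdPaper

open Monoid

variable {ι : Type*} {G : ι → Type*} [∀ i, Group (G i)]

/-- An element of a free product is *hyperbolic* if it lies in no conjugate
`g⁻¹ H_a g` of a factor. -/
def IsHyperbolic (w : CoprodI G) : Prop :=
  ∀ (i : ι) (g : CoprodI G) (x : G i), w ≠ g⁻¹ * CoprodI.of x * g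

/-- The reduced form (as the list of its syllables) of an element of a free product. -/
noncomputable def redList (w : CoprodI G) : List (Σ i, G i) :=
  letI := Classical.decEq ι
  letI : ∀ i, DecidableEq (G i) := fun _ => Classical.decEq _
  (CoprodI.Word.equiv w).toList

/-- The (syllable) length `|w|` of an element of a free product:
the number of syllables of its reduced form. -/
noncomputable def len (w : CoprodI G) : ℕ := (redList w).length

/-- The cyclic length `|w|_c`: the length of a cyclically reduced word conjugate
to `w`, equivalently the minimal length of a conjugate of `w`. -/
noncomputable def cyclicLength (w : CoprodI G) : ℕ :=
  sInf (Set.range fun g : CoprodI G => len (g⁻¹ * w * g))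

/-- A word is cyclically reduced iff it is nontrivial and has minimal length in
its conjugacy class (for a reduced word of length `≥ 2` this says exactly that its
first and last syllables lie in distinct factors). -/
def IsCyclicallyReduced (w : CoprodI G) : Prop :=
  w ≠ 1 ∧ len w = cyclicLength w

/-- `w` is a proper power: `w = h ^ n` for some `h` and some `n ≥ 2`. -/
def IsProperPower (w : CoprodI G) : Prop :=
  ∃ (h : CoprodI G) (n : ℕ), 2 ≤ n ∧ w = h ^ n

/-- A *simple* word: a cyclically reduced word of length at least two that is not
a proper power. -/
def IsSimple (w : CoprodI G) : Prop :=
  IsCyclicallyReduced w ∧ 2 ≤ len w ∧ ¬ IsProperPower w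

/-- The radical length `|w|_r` of a hyperbolic element `w = f⁻¹ ⬝ A^k ∘ f`
(`A` simple, `f` reduced, `k ≥ 1`) is `|A|`; equivalently, it is the least cyclic
length of a root of `w`. -/
noncomputable def radicalLength (w : CoprodI G) : ℕ :=
  sInf {n | ∃ (h : CoprodI G) (k : ℕ), 0 < k ∧ w = h ^ k ∧ n = cyclicLength h}

/-- `u` is a *subword* of `w`: the reduced form of `w` is `f₁ ⬝ u ⬝ f₂`,
i.e. the reduced form of `u` occurs as a contiguous sublist of the reduced form
of `w`. -/
def IsSubword (u w : CoprodI G) : Prop :=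
  ∃ l₁ l₂ : List (Σ i, G i), redList w = l₁ ++ redList u ++ l₂

/-- One step of bringing a list of syllables to reduced form which does not affect
the first or the last syllable of the word: two adjacent syllables from the same
factor, not including the first or the last syllable of the word, are merged
(or cancelled, if their product is trivial). -/
def InnerStep (L L' : List (Σ i, G i)) : Prop :=
  ∃ (l₁ l₂ : List (Σ i, G i)) (i : ι) (a b : G i),
    l₁ ≠ [] ∧ l₂ ≠ [] ∧
    L = l₁ ++ ⟨i, a⟩ :: ⟨i, b⟩ :: l₂ ∧
    ((a * b = 1 ∧ L' = l₁ ++ l₂) ∨ (a * b ≠ 1 ∧ L' = l₁ ++ ⟨i, a * b⟩ :: l₂))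

/-- `EndsUnaffected L w` : the concatenation `L` of syllables (of reduced words
whose product is `w`) can be brought to the reduced form of `w` by cancellations
and mergings none of which affects the first or the last syllable. -/
def EndsUnaffected (L : List (Σ i, G i)) (w : CoprodI G) : Prop :=
  Relation.ReflTransGen InnerStep L (redList w)

/-- The commutator as used in the paper: `[x, y] = x⁻¹ y⁻¹ x y`. -/
def pcomm {H : Type*} [Group H] (x y : H) : H := x⁻¹ * y⁻¹ * x * y

/-- The word `L₂(z₀, z₁)` from the paper. -/
def L2 {H : Type*} [Group H] (x y : H) : H :=
  pcomm (x ^ 10) (y ^ 10) ^ 5000 * x * pcomm (x ^ 10) (y ^ 10) ^ 200 * y *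
    pcomm (x ^ 10) (y ^ 10) ^ 400 * x⁻¹ * pcomm (x ^ 10) (y ^ 10) ^ 600 * y⁻¹ *
    pcomm (x ^ 10) (y ^ 10) ^ 5000

/-- The words `E_{k̲[j,0]}`: `Ew k y j` is `E_{k̲[j+1,0]}(y₀, …, y_j)`, defined by
`E_{k̲[1,0]}(z₀) = z₀^{k₀}` and
`E_{k̲[j,0]}(z₀,…,z_{j-1}) = [E_{k̲[j-1,0]}(z₀,…,z_{j-2})², z_{j-1}^{2 k_{j-1}}]`. -/
def Ew {H : Type*} [Group H] (k : ℕ → ℕ) (y : ℕ → H) : ℕ → H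
  | 0 => y 0 ^ k 0
  | j + 1 => pcomm (Ew k y j ^ 2) (y (j + 1) ^ (2 * k (j + 1)))

/-- The words `E_n`: `En y j` is `E_{j+1}(y₀, …, y_j)`, defined by
`E₂(z₀, z₁) = [z₀², z₁²]` and `E_n(z₀,…,z_{n-1}) = [E_{n-1}(z₀,…,z_{n-2})², z_{n-1}²]`. -/
def En {H : Type*} [Group H] (y : ℕ → H) : ℕ → H
  | 0 => y 0
  | j + 1 => pcomm (En y j ^ 2) (y (j + 1) ^ 2)

/-- A subgroup `K` of `Γ` is *verbally closed* if every equation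
`w(x₁,…,xₙ) = h` (with `w` in the free group and `h ∈ K`) having a solution
in `Γ` also has a solution in `K`. -/
def IsVerballyClosed {Γ : Type*} [Group Γ] (K : Subgroup Γ) : Prop :=
  ∀ (n : ℕ) (w : FreeGroup (Fin n)) (h : Γ), h ∈ K →
    (∃ x : Fin n → Γ, FreeGroup.lift x w = h) →
    ∃ y : Fin n → Γ, (∀ i, y i ∈ K) ∧ FreeGroup.lift y w = h

/-- A subgroup `K` of `Γ` is *algebraically closed in `Γ`* if every finite system
of equations `w_j(x₁,…,xₙ, K) = 1` with coefficients in `K` (i.e. `w_j` lies in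
the free product of the free group `F_n` and `K`) having a solution in `Γ`
also has a solution in `K`. -/
def IsAlgebraicallyClosedIn {Γ : Type*} [Group Γ] (K : Subgroup Γ) : Prop :=
  ∀ (n m : ℕ) (w : Fin m → Monoid.Coprod (FreeGroup (Fin n)) K),
    (∃ x : Fin n → Γ, ∀ j, Monoid.Coprod.lift (FreeGroup.lift x) K.subtype (w j) = 1) →
    ∃ y : Fin n → Γ, (∀ i, y i ∈ K) ∧
      ∀ j, Monoid.Coprod.lift (FreeGroup.lift y) K.subtype (w j) = 1

def Good (L : List (Σ i, G i)) : Prop :=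
  L.Chain' (fun a b => a.1 ≠ b.1) ∧ ∀ x ∈ L, x.2 ≠ 1

noncomputable def eprod (L : List (Σ i, G i)) : CoprodI G :=
  (L.map fun l => CoprodI.of l.2).prod

theorem good_redList (w : CoprodI G) : Good (redList w) :=
  letI := Classical.decEq ι
  letI : ∀ i, DecidableEq (G i) := fun _ => Classical.decEq _
  ⟨(CoprodI.Word.equiv w).chain_ne, (CoprodI.Word.equiv w).ne_one⟩

theorem eprod_redList (w : CoprodI G) : eprod (redList w) = w :=
  letI := Classical.decEq ι
  letI : ∀ i, DecidableEq (G i) := fun _ => Classical.decEq _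
  CoprodI.Word.equiv.left_inv w

theorem redList_eprod {L : List (Σ i, G i)} (h : Good L) : redList (eprod L) = L := by
  letI := Classical.decEq ι
  letI : ∀ i, DecidableEq (G i) := fun _ => Classical.decEq _
  have he : eprod L = CoprodI.Word.prod ⟨L, h.2, h.1⟩ := rfl
  rw [redList, he]
  have h2 : CoprodI.Word.equiv (CoprodI.Word.prod ⟨L, h.2, h.1⟩) = ⟨L, h.2, h.1⟩ :=
    CoprodI.Word.equiv.right_inv (⟨L, h.2, h.1⟩ : CoprodI.Word G)
  rw [h2]

theorem eprod_nil : eprod ([] : List (Σ i, G i)) = 1 := rfl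

theorem eprod_cons (a : Σ i, G i) (L : List (Σ i, G i)) :
    eprod (a :: L) = CoprodI.of a.2 * eprod L := by
  simp [eprod]

theorem eprod_append (A B : List (Σ i, G i)) : eprod (A ++ B) = eprod A * eprod B := by
  simp [eprod]

theorem eprod_singleton (a : Σ i, G i) : eprod [a] = CoprodI.of a.2 := by
  simp [eprod]

theorem redList_one : redList (1 : CoprodI G) = [] := by
  have : Good ([] : List (Σ i, G i)) := ⟨List.isChain_nil, by simp⟩
  simpa [eprod_nil] using redList_eprod this

theorem eq_one_of_redList_nil {w : CoprodI G} (h : redList w = []) : w = 1 := by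
  have := eprod_redList w
  rw [h, eprod_nil] at this; exact this.symm

theorem redList_of {i : ι} {x : G i} (hx : x ≠ 1) :
    redList (CoprodI.of x) = [⟨i, x⟩] := by
  have hg : Good [(⟨i, x⟩ : Σ i, G i)] := ⟨List.isChain_singleton _, by simpa⟩
  simpa [eprod_singleton] using redList_eprod hg

theorem len_of_le {i : ι} (x : G i) : (redList (CoprodI.of x)).length ≤ 1 := by
  by_cases hx : x = 1
  · subst hx; rw [map_one, redList_one]; simp
  · rw [redList_of hx]; simp

theorem Good.append_left {A B : List (Σ i, G i)} (h : Good (A ++ B)) : Good A :=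
  ⟨(List.isChain_append.mp h.1).1, fun x hx => h.2 x (by simp [hx])⟩

theorem Good.append_right {A B : List (Σ i, G i)} (h : Good (A ++ B)) : Good B :=
  ⟨(List.isChain_append.mp h.1).2.1, fun x hx => h.2 x (by simp [hx])⟩

theorem Good.infix {A B C : List (Σ i, G i)} (h : Good (A ++ B ++ C)) : Good B :=
  (h.append_left).append_right

theorem Good.tail {a : Σ i, G i} {L : List (Σ i, G i)} (h : Good (a :: L)) : Good L :=
  ⟨h.1.tail, fun x hx => h.2 x (by simp [hx])⟩

/-- reduced concatenation multiplication -/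
theorem redList_mul_of_good {u v : CoprodI G} (h : Good (redList u ++ redList v)) :
    redList (u * v) = redList u ++ redList v := by
  have : eprod (redList u ++ redList v) = u * v := by
    rw [eprod_append, eprod_redList, eprod_redList]
  rw [← this, redList_eprod h]


theorem eprod_cons' {j : ι} (y : G j) (L : List (Σ i, G i)) :
    eprod (⟨j, y⟩ :: L) = CoprodI.of y * eprod L := eprod_cons _ _

theorem eprod_singleton' {j : ι} (y : G j) :
    eprod [(⟨j, y⟩ : Σ i, G i)] = CoprodI.of y := eprod_singleton _

theorem suf_one {i : ι} (x : G i) (v : CoprodI G) :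
    ∃ (l : List (Σ i, G i)) (d : ℕ), d ≤ 1 ∧ l.length ≤ 1 ∧
      redList (CoprodI.of x * v) = l ++ (redList v).drop d := by
  by_cases hx : x = 1
  · subst hx; exact ⟨[], 0, by simp, by simp, by simp [map_one]⟩
  rcases hL : redList v with _ | ⟨⟨j, y⟩, M⟩
  · refine ⟨[⟨i,x⟩], 0, by simp, by simp, ?_⟩
    have hv : v = 1 := eq_one_of_redList_nil hL
    simp [hv, redList_of hx]
  · have hgood : Good (⟨j,y⟩ :: M) := hL ▸ good_redList v
    have hv : v = CoprodI.of y * eprod M := by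
      conv_lhs => rw [← eprod_redList v, hL, eprod_cons']
    by_cases hij : i = j
    · subst hij
      have hmul : CoprodI.of x * v = CoprodI.of (x*y) * eprod M := by
        rw [hv, ← mul_assoc, ← map_mul]
      by_cases hxy : x * y = 1
      · refine ⟨[], 1, le_rfl, by simp, ?_⟩
        rw [hmul, hxy, map_one, one_mul, redList_eprod hgood.tail]
        rfl
      · refine ⟨[⟨i, x*y⟩], 1, le_rfl, by simp, ?_⟩
        have hg2 : Good (⟨i, x*y⟩ :: M) := by
          refine ⟨?_, ?_⟩
          · cases M with
            | nil => exact List.isChain_singleton _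
            | cons b M' =>
              exact List.isChain_cons_cons.mpr ⟨(List.isChain_cons_cons.mp hgood.1).1,
                (List.isChain_cons_cons.mp hgood.1).2⟩
          · intro z hz
            rcases List.mem_cons.mp hz with h | h
            · subst h; exact hxy
            · exact hgood.2 z (List.mem_cons_of_mem _ h)
        have heq : CoprodI.of x * v = eprod (⟨i, x*y⟩ :: M) := by
          rw [hmul, eprod_cons']
        rw [heq, redList_eprod hg2]
        rfl
    · refine ⟨[⟨i, x⟩], 0, by simp, by simp, ?_⟩
      have hg2 : Good (⟨i,x⟩ :: ⟨j,y⟩ :: M) := by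
        refine ⟨List.isChain_cons_cons.mpr ⟨hij, hgood.1⟩, ?_⟩
        intro z hz
        rcases List.mem_cons.mp hz with h | h
        · subst h; exact hx
        · exact hgood.2 z h
      have heq : CoprodI.of x * v = eprod (⟨i,x⟩ :: ⟨j,y⟩ :: M) := by
        rw [eprod_cons', eprod_cons', ← hv]
      rw [heq, redList_eprod hg2]
      rfl

theorem pre_one {i : ι} (x : G i) (v : CoprodI G) :
    ∃ (l : List (Σ i, G i)) (n : ℕ), (redList v).length ≤ n + 1 ∧ l.length ≤ 1 ∧
      redList (v * CoprodI.of x) = (redList v).take n ++ l := by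
  by_cases hx : x = 1
  · subst hx; exact ⟨[], (redList v).length, by simp, by simp, by simp [map_one]⟩
  rcases (List.eq_nil_or_concat (redList v)) with hL | ⟨M, ⟨j, y⟩, hL⟩
  · refine ⟨[⟨i,x⟩], 0, by simp [hL], by simp, ?_⟩
    have hv : v = 1 := eq_one_of_redList_nil hL
    simp [hv, redList_of hx, hL]
  · rw [List.concat_eq_append] at hL
    have hgood : Good (M ++ [⟨j,y⟩]) := hL ▸ good_redList v
    have hv : v = eprod M * CoprodI.of y := by
      conv_lhs => rw [← eprod_redList v, hL, eprod_append, eprod_singleton']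
    have hlen : (redList v).length = M.length + 1 := by rw [hL]; simp
    have htakeM : (redList v).take M.length = M := by
      rw [hL]; exact List.take_left
    by_cases hij : j = i
    · subst hij
      have hmul : v * CoprodI.of x = eprod M * CoprodI.of (y*x) := by
        rw [hv, mul_assoc, ← map_mul]
      by_cases hyx : y * x = 1
      · refine ⟨[], M.length, by omega, by simp, ?_⟩
        rw [hmul, hyx, map_one, mul_one, redList_eprod hgood.append_left, htakeM]
        simp
      · refine ⟨[⟨j, y*x⟩], M.length, by omega, by simp, ?_⟩
        have hg2 : Good (M ++ [⟨j, y*x⟩]) := by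
          refine ⟨?_, ?_⟩
          · rcases List.isChain_append.mp hgood.1 with ⟨h1, _, h3⟩
            refine List.isChain_append.mpr ⟨h1, List.isChain_singleton _, ?_⟩
            intro p hp q hq
            simp only [List.head?_cons, Option.mem_def, Option.some.injEq] at hq
            subst hq
            exact h3 p hp ⟨j, y⟩ (by simp)
          · intro z hz
            rcases List.mem_append.mp hz with h | h
            · exact hgood.2 z (by simp [h])
            · simp at h; subst h; exact hyx
        have heq : v * CoprodI.of x = eprod (M ++ [⟨j,y*x⟩]) := by
          rw [hmul, eprod_append, eprod_singleton']
        rw [heq, redList_eprod hg2, htakeM]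
    · refine ⟨[⟨i,x⟩], (redList v).length, by omega, by simp, ?_⟩
      have hg2 : Good ((M ++ [⟨j,y⟩]) ++ [⟨i,x⟩]) := by
        refine ⟨?_, ?_⟩
        · refine List.isChain_append.mpr ⟨hgood.1, List.isChain_singleton _, ?_⟩
          intro p hp q hq
          simp only [List.head?_cons, Option.mem_def, Option.some.injEq] at hq
          subst hq
          rw [List.getLast?_concat] at hp
          simp only [Option.mem_def, Option.some.injEq] at hp
          subst hp
          exact hij
        · intro z hz
          rcases List.mem_append.mp hz with h | h
          · exact hgood.2 z h
          · simp at h; subst h; exact hx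
      have heq : v * CoprodI.of x = eprod ((M ++ [⟨j,y⟩]) ++ [⟨i,x⟩]) := by
        have e1 := eprod_append (M ++ [(⟨j,y⟩ : Σ i, G i)]) ([(⟨i,x⟩ : Σ i, G i)])
        have e2 := eprod_append M ([(⟨j,y⟩ : Σ i, G i)])
        rw [e1, e2, eprod_singleton', eprod_singleton', hv]
      rw [heq, redList_eprod hg2, List.take_length, hL]

/-! ### Pure sequence Fine–Wilf machinery -/

section FW
variable {Λ : Type*} {α β : ℕ → Λ}

theorem per_add_mul {p : ℕ} (h : ∀ j, α (j + p) = α j) (j k : ℕ) : α (j + p * k) = α j := by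
  induction k with
  | zero => simp
  | succ n ih =>
    have : j + p * (n + 1) = (j + p * n) + p := by ring
    rw [this, h, ih]

theorem per_mod {p : ℕ} (hp : 0 < p) (h : ∀ j, α (j + p) = α j) (j : ℕ) : α j = α (j % p) := by
  conv_lhs => rw [← Nat.mod_add_div j p]
  rw [per_add_mul h]

theorem fw_core {p q : ℕ} (hp : 0 < p) (hq : 0 < q)
    (hper : ∀ j, α (j + p) = α j)
    (hwin : ∀ j, j + Nat.gcd p q < p → α j = α (j + q)) :
    ∀ j, α (j + Nat.gcd p q) = α j := by
  set g := Nat.gcd p q with hgdef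
  have hg0 : 0 < g := Nat.gcd_pos_of_pos_left _ hp
  have hgp : g ∣ p := Nat.gcd_dvd_left p q
  have hgq : g ∣ q := Nat.gcd_dvd_right p q
  obtain ⟨m, hm⟩ := hgp
  obtain ⟨q', hq'⟩ := hgq
  have hm0 : 0 < m := by
    rcases Nat.eq_zero_or_pos m with h | h
    · subst h; simp at hm; omega
    · exact h
  have hcop : Nat.Coprime m q' := by
    have h1 : p / g = m := by rw [hm, Nat.mul_div_cancel_left _ hg0]
    have h2 : q / g = q' := by rw [hq', Nat.mul_div_cancel_left _ hg0]
    have := Nat.coprime_div_gcd_div_gcd (m := p) (n := q) (by omega)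
    rwa [← hgdef, h1, h2] at this
  have rule : ∀ j, j % p + g < p → α j = α (j + q) := by
    intro j hj
    have h1 : α j = α (j % p) := per_mod hp hper j
    have h2 : α (j % p) = α (j % p + q) := hwin _ hj
    have h3 : α (j % p + q) = α (j + q) := by
      conv_rhs => rw [show j + q = (j % p + q) + p * (j / p) by
        conv_lhs => rw [← Nat.mod_add_div j p]
        ring]
      rw [per_add_mul hper]
    rw [h1, h2, h3]
  have main : ∀ x y, x < p → y < p → x % g = y % g → α x = α y := by
    intro x y hx hy hxy
    set c := x % g with hc
    have hcg : c < g := Nat.mod_lt _ hg0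
    set P1 := g * (m - 1) with hP1def
    have hP1 : P1 + g = p := by
      rw [hm, hP1def]
      cases m with
      | zero => omega
      | succ n => simp [Nat.mul_succ]
    set b := P1 + c with hbdef
    have hbp : b < p := by omega
    have hbmod : b % g = c := by
      rw [hbdef, hP1def, Nat.add_comm, Nat.add_mul_mod_self_left, Nat.mod_eq_of_lt hcg]
    have bad_unique : ∀ z, z < p → z % g = c → z ≠ b → z + g < p := by
      intro z hz hzc hzb
      by_contra hcon
      push_neg at hcon
      have h1 : P1 ≤ z := by omega
      set d := z - P1 with hd
      have hdg : d < g := by omega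
      have hzd : z = d + g * (m - 1) := by omega
      have : z % g = d := by rw [hzd, Nat.add_mul_mod_self_left, Nat.mod_eq_of_lt hdg]
      apply hzb
      omega
    have hWlt : ∀ t : ℕ, (b + t * q) % p < p := fun t => Nat.mod_lt _ hp
    have hWmod : ∀ t : ℕ, (b + t * q) % p % g = c := by
      intro t
      rw [Nat.mod_mod_of_dvd _ ⟨m, hm⟩,
        show b + t * q = b + g * (t * q') by rw [hq']; ring,
        Nat.add_mul_mod_self_left, hbmod]
    have step : ∀ t : ℕ, (b + t * q) % p ≠ b → α (b + t * q) = α (b + (t+1) * q) := by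
      intro t hne
      have hside : (b + t * q) % p + g < p :=
        bad_unique _ (hWlt t) (hWmod t) hne
      have h := rule (b + t * q) hside
      rw [h]
      congr 1
      ring
    have chain : ∀ t : ℕ, (∀ s, 1 ≤ s → s ≤ t → (b + s * q) % p ≠ b) →
        α (b + (t+1) * q) = α (b + 1 * q) := by
      intro t
      induction t with
      | zero => intro _; rfl
      | succ n ih =>
        intro hh
        have h1 : α (b + (n+1) * q) = α (b + (n+2) * q) :=
          step (n+1) (hh (n+1) (by omega) (by omega))
        rw [show n + 1 + 1 = n + 2 by rfl, ← h1]
        exact ih (fun s hs1 hs2 => hh s hs1 (by omega))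
    have noret : ∀ t, 0 < t → t < m → (b + t * q) % p ≠ b := by
      intro t ht1 ht2 hcon
      have hmod : (b : ℕ) ≡ b + t * q [MOD p] := by
        unfold Nat.ModEq
        rw [hcon, Nat.mod_eq_of_lt hbp]
      have hdvd : p ∣ t * q := by
        have := (Nat.modEq_iff_dvd' (by omega)).mp hmod
        simpa using this
      obtain ⟨e, he⟩ := hdvd
      have h2 : m ∣ t * q' := by
        refine ⟨e, Nat.eq_of_mul_eq_mul_left hg0 ?_⟩
        have : t * q = t * (g * q') := by rw [hq']
        rw [this] at he
        rw [hm] at he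
        calc g * (t * q') = t * (g * q') := by ring
        _ = g * m * e := he
        _ = g * (m * e) := by ring
      have h3 : m ∣ t := Nat.Coprime.dvd_of_dvd_mul_right hcop h2
      have := Nat.le_of_dvd ht1 h3
      omega
    have hWm : (b + m * q) % p = b := by
      have : b + m * q = b + p * q' := by rw [hm, hq']; ring
      rw [this, Nat.add_mul_mod_self_left, Nat.mod_eq_of_lt hbp]
    have surj : ∀ z, z < p → z % g = c → ∃ t, 1 ≤ t ∧ t ≤ m ∧ (b + t * q) % p = z := by
      intro z hz hzc
      have hgZ : (g:ℤ) = p * Nat.gcdA p q + q * Nat.gcdB p q := Nat.gcd_eq_gcd_ab p q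
      have hdvd : (g:ℤ) ∣ (z : ℤ) - b := by
        have h1 : (z:ℤ) % g = (b:ℤ) % g := by
          have : z % g = b % g := by rw [hzc, hbmod]
          exact_mod_cast congrArg (Nat.cast : ℕ → ℤ) this
        exact (Int.ModEq.symm (h1 : Int.ModEq _ _ _)).dvd
      obtain ⟨s, hs⟩ := hdvd
      set A := Nat.gcdA p q with hA
      set B := Nat.gcdB p q with hB
      have e1 : (q * B : ℤ) ≡ g [ZMOD p] := by
        have hd : (p:ℤ) ∣ (g:ℤ) - q * B := ⟨A, by rw [hgZ]; ring⟩
        exact Int.modEq_iff_dvd.mpr hd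
      have e2 : ((b : ℤ) + (B * s) * q) ≡ z [ZMOD p] := by
        have h1 : ((q * B : ℤ)) * s ≡ g * s [ZMOD p] := e1.mul_right s
        have h2 : ((b:ℤ) + (q * B) * s) ≡ (b + g * s) [ZMOD p] := h1.add_left b
        have h3 : (b : ℤ) + g * s = z := by omega
        rw [h3] at h2
        convert h2 using 2
        ring
      set T : ℤ := B * s with hT
      set t₀ : ℕ := (T % m).toNat with ht₀
      have hTm0 : 0 ≤ T % m := Int.emod_nonneg T (by exact_mod_cast hm0.ne')
      have hTmlt : T % m < m := Int.emod_lt_of_pos T (by exact_mod_cast hm0)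
      have ht₀m : (t₀ : ℤ) = T % m := Int.toNat_of_nonneg hTm0
      have e3 : (m:ℤ) ∣ T - t₀ := by
        rw [ht₀m]
        exact Int.dvd_self_sub_of_emod_eq rfl
      obtain ⟨k, hk⟩ := e3
      have e4 : ((b : ℤ) + t₀ * q) ≡ ((b:ℤ) + T * q) [ZMOD p] := by
        have hdd : (p : ℤ) ∣ ((b:ℤ) + T * q) - ((b:ℤ) + t₀ * q) := by
          refine ⟨k * q', ?_⟩
          have h5 : ((b:ℤ) + T * q) - ((b:ℤ) + t₀ * q) = (T - t₀) * q := by ring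
          rw [h5, hk]
          have hpz : (p : ℤ) = (g:ℤ) * m := by exact_mod_cast hm
          have hqz : (q : ℤ) = (g:ℤ) * q' := by exact_mod_cast hq'
          rw [hqz, hpz]
          ring
        exact Int.modEq_iff_dvd.mpr hdd
      have e5 : ((b : ℤ) + t₀ * q) ≡ z [ZMOD p] := e4.trans e2
      have hnat : (b + t₀ * q) % p = z % p := by
        have : ((b + t₀ * q : ℕ) : ℤ) % (p:ℕ) = ((z:ℕ) : ℤ) % (p:ℕ) := by
          push_cast
          exact e5
        exact_mod_cast this
      rw [Nat.mod_eq_of_lt hz] at hnat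
      rcases Nat.eq_zero_or_pos t₀ with h0 | h0
      · refine ⟨m, by omega, le_rfl, ?_⟩
        rw [hWm]
        rw [h0] at hnat
        simp only [Nat.zero_mul, Nat.add_zero] at hnat
        rw [Nat.mod_eq_of_lt hbp] at hnat
        exact hnat
      · exact ⟨t₀, h0, by omega, hnat⟩
    have hval : ∀ z, z < p → z % g = c → α z = α (b + 1 * q) := by
      intro z hz hzc
      obtain ⟨t, ht1, htm, htW⟩ := surj z hz hzc
      have hcond : ∀ s, 1 ≤ s → s ≤ t - 1 → (b + s * q) % p ≠ b :=
        fun s hs1 hs2 => noret s hs1 (by omega)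
      have hchain := chain (t - 1) hcond
      rw [show t - 1 + 1 = t by omega] at hchain
      have hz2 : α z = α (b + t * q) := by
        rw [← htW]
        exact (per_mod hp hper _).symm
      rw [hz2, hchain]
    rw [hval x hx rfl, hval y hy (by rw [← hxy])]
  intro j
  have h1 : α (j + g) = α ((j + g) % p) := per_mod hp hper _
  have h2 : α j = α (j % p) := per_mod hp hper j
  rw [h1, h2]
  apply main _ _ (Nat.mod_lt _ hp) (Nat.mod_lt _ hp)
  rw [Nat.mod_mod_of_dvd _ ⟨m, hm⟩, Nat.mod_mod_of_dvd _ ⟨m, hm⟩, Nat.add_mod_right]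

theorem fw_inf {p q : ℕ} (hp : 0 < p) (hq : 0 < q)
    (ha : ∀ j, α (j + p) = α j) (hb : ∀ j, β (j + q) = β j)
    (hagree : ∀ j, j < p + q - Nat.gcd p q → α j = β j) :
    (∀ j, α j = β j) ∧ (∀ j, α (j + Nat.gcd p q) = α j) ∧
      (∀ j, β (j + Nat.gcd p q) = β j) := by
  set g := Nat.gcd p q with hgdef
  have hg0 : 0 < g := Nat.gcd_pos_of_pos_left _ hp
  have hgle1 : g ≤ p := Nat.le_of_dvd hp (Nat.gcd_dvd_left _ _)
  have hgle2 : g ≤ q := Nat.le_of_dvd hq (Nat.gcd_dvd_right _ _)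
  have hαg : ∀ j, α (j + g) = α j := by
    apply fw_core hp hq ha
    intro j hj
    have h1 : α j = β j := hagree j (by omega)
    have h2 : β j = β (j + q) := (hb j).symm
    have h3 : β (j + q) = α (j + q) := (hagree (j + q) (by omega)).symm
    rw [h1, h2, h3]
  have hβg : ∀ j, β (j + g) = β j := by
    have := fw_core (α := β) hq hp hb ?_
    · rwa [Nat.gcd_comm q p] at this
    · intro j hj
      rw [Nat.gcd_comm q p] at hj
      have h1 : β j = α j := (hagree j (by omega)).symm
      have h2 : α j = α (j + p) := (ha j).symm
      have h3 : α (j + p) = β (j + p) := hagree (j + p) (by omega)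
      rw [h1, h2, h3]
  refine ⟨?_, hαg, hβg⟩
  intro j
  have h1 : α j = α (j % g) := per_mod hg0 hαg j
  have h2 : β j = β (j % g) := per_mod hg0 hβg j
  have h3 : α (j % g) = β (j % g) := hagree _ (by
    have := Nat.mod_lt j hg0
    omega)
  rw [h1, h2, h3]

end FW

/-! ### `rep` (repetition of a list) lemmas -/

section Rep
variable {Λ : Type*}

def rep (a : ℕ) (S : List Λ) : List Λ := (List.replicate a S).flatten

@[simp] theorem rep_zero (S : List Λ) : rep 0 S = [] := rfl

theorem rep_succ (a : ℕ) (S : List Λ) : rep (a+1) S = S ++ rep a S := by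
  simp [rep, List.replicate_succ]

@[simp] theorem length_rep (a : ℕ) (S : List Λ) : (rep a S).length = a * S.length := by
  induction a with
  | zero => simp
  | succ n ih =>
    rw [rep_succ, List.length_append, ih]
    ring

theorem rep_add (a b : ℕ) (S : List Λ) : rep (a + b) S = rep a S ++ rep b S := by
  induction a with
  | zero => simp
  | succ n ih =>
    rw [show n + 1 + b = (n + b) + 1 by omega, rep_succ, rep_succ, ih]
    simp

theorem rep_mul (a b : ℕ) (S : List Λ) : rep (a * b) S = rep a (rep b S) := by
  induction a with
  | zero => simp
  | succ n ih =>
    rw [show (n+1) * b = b + n * b by ring, rep_add, rep_succ, ih]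

theorem rep_one (S : List Λ) : rep 1 S = S := by simp [rep]

theorem getElem?_rep {S : List Λ} (hS : 0 < S.length) {a i : ℕ} (h : i < a * S.length) :
    (rep a S)[i]? = S[i % S.length]? := by
  induction a generalizing i with
  | zero => omega
  | succ n ih =>
    rw [rep_succ]
    rcases lt_or_ge i S.length with hi | hi
    · rw [List.getElem?_append_left hi, Nat.mod_eq_of_lt hi]
    · rw [List.getElem?_append_right hi, ih (by
        have : (n+1) * S.length = n * S.length + S.length := by ring
        omega), Nat.mod_eq_sub_mod hi]
end Rep

section CFL
variable {Λ : Type*}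

theorem getElem?_take' {l : List Λ} {n i : ℕ} (h : i < n) : (l.take n)[i]? = l[i]? := by
  rw [List.getElem?_take]; simp [h]

/-- From an infix occurrence inside `rep a S`, periodic indexing. -/
theorem infix_rep_index {S U : List Λ} {a : ℕ} {l1 l2 : List Λ}
    (hS : S ≠ []) (hSe : rep a S = l1 ++ U ++ l2) :
    ∀ j, j < U.length → U[j]? = S[(l1.length + j) % S.length]? := by
  intro j hj
  have hp : 0 < S.length := List.length_pos_iff.mpr hS
  have hlenX : (rep a S).length = l1.length + U.length + l2.length := by
    rw [hSe]; simp; omega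
  have hb : l1.length + j < a * S.length := by
    have := length_rep a S
    omega
  have e1 : (rep a S)[l1.length + j]? = U[j]? := by
    rw [hSe, List.append_assoc, List.getElem?_append_right (by omega),
      Nat.add_sub_cancel_left, List.getElem?_append_left hj]
  rw [← e1, getElem?_rep hp hb]

theorem cfl {S T U : List Λ} {a b : ℕ} (hS : S ≠ []) (hT : T ≠ [])
    (h1 : ∃ l1 l2, rep a S = l1 ++ U ++ l2)
    (h2 : ∃ l1 l2, rep b T = l1 ++ U ++ l2)
    (hlen : S.length + T.length - Nat.gcd S.length T.length ≤ U.length) :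
    ∃ C₁ C₂ : List Λ,
      (C₁ ++ C₂).length = Nat.gcd S.length T.length ∧
      S = rep (S.length / Nat.gcd S.length T.length) (C₁ ++ C₂) ∧
      T = rep (T.length / Nat.gcd S.length T.length) (C₂ ++ C₁) := by
  set p := S.length with hpdef
  set q := T.length with hqdef
  set g := Nat.gcd p q with hgdef
  have hp0 : 0 < p := List.length_pos_iff.mpr hS
  have hq0 : 0 < q := List.length_pos_iff.mpr hT
  have hg0 : 0 < g := Nat.gcd_pos_of_pos_left _ hp0
  have hgp : g ∣ p := Nat.gcd_dvd_left _ _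
  have hgq : g ∣ q := Nat.gcd_dvd_right _ _
  have hgle1 : g ≤ p := Nat.le_of_dvd hp0 hgp
  have hgle2 : g ≤ q := Nat.le_of_dvd hq0 hgq
  obtain ⟨l1, l2, hSe⟩ := h1
  obtain ⟨l3, l4, hTe⟩ := h2
  set t₁ := l1.length with ht₁
  set t₂ := l3.length with ht₂
  have hU1 := infix_rep_index hS hSe
  have hU2 := infix_rep_index hT hTe
  set e := S.head hS with he
  set α : ℕ → Λ := fun j => (S[(t₁ + j) % p]?).getD e with hα
  set β : ℕ → Λ := fun j => (T[(t₂ + j) % q]?).getD e with hβ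
  have ha : ∀ j, α (j + p) = α j := by
    intro j
    have : (t₁ + (j + p)) % p = (t₁ + j) % p := by
      rw [← Nat.add_assoc, Nat.add_mod_right]
    simp only [hα, this]
  have hb : ∀ j, β (j + q) = β j := by
    intro j
    have : (t₂ + (j + q)) % q = (t₂ + j) % q := by
      rw [← Nat.add_assoc, Nat.add_mod_right]
    simp only [hβ, this]
  have hagree : ∀ j, j < p + q - g → α j = β j := by
    intro j hj
    have hjU : j < U.length := by omega
    simp only [hα, hβ]
    rw [← hU1 j hjU, ← hU2 j hjU]
  obtain ⟨heq, hag, hbg⟩ := fw_inf hp0 hq0 ha hb hagree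
  -- value of α at shifted positions
  have hsolve : ∀ x, x < p → ∃ j, (t₁ + j) % p = x := by
    intro x hx
    refine ⟨p - t₁ % p + x, ?_⟩
    have hdm := Nat.mod_add_div t₁ p
    have hrp : t₁ % p < p := Nat.mod_lt _ hp0
    obtain ⟨pk, hpk⟩ : ∃ c, p * (t₁ / p) = c := ⟨_, rfl⟩
    rw [hpk] at hdm
    have h3 : t₁ + (p - t₁ % p + x) = x + (pk + p) := by omega
    rw [h3, ← hpk, show x + (p * (t₁ / p) + p) = x + p * (t₁ / p + 1) by ring,
      Nat.add_mul_mod_self_left, Nat.mod_eq_of_lt hx]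
  have hsolveq : ∀ x, x < q → ∃ j, (t₂ + j) % q = x := by
    intro x hx
    refine ⟨q - t₂ % q + x, ?_⟩
    have hdm := Nat.mod_add_div t₂ q
    have hrp : t₂ % q < q := Nat.mod_lt _ hq0
    obtain ⟨pk, hpk⟩ : ∃ c, q * (t₂ / q) = c := ⟨_, rfl⟩
    rw [hpk] at hdm
    have h3 : t₂ + (q - t₂ % q + x) = x + (pk + q) := by omega
    rw [h3, ← hpk, show x + (q * (t₂ / q) + q) = x + q * (t₂ / q + 1) by ring,
      Nat.add_mul_mod_self_left, Nat.mod_eq_of_lt hx]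
  have Sx : ∀ x, x < p → S[x]? = S[(x + g) % p]? := by
    intro x hx
    obtain ⟨j, hj⟩ := hsolve x hx
    have h5 := hag j
    have e2 : (t₁ + (j + g)) % p = (x + g) % p := by
      have : (t₁ + j) % p = x % p := by rw [hj, Nat.mod_eq_of_lt hx]
      have h6 : (t₁ + j) + g ≡ x + g [MOD p] := Nat.ModEq.add_right g this
      rw [← Nat.add_assoc]
      exact h6
    simp only [hα, ← hgdef, e2, hj] at h5
    rw [List.getElem?_eq_getElem hx,
      List.getElem?_eq_getElem (Nat.mod_lt _ hp0 : (x + g) % p < p)] at h5 ⊢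
    simp only [Option.getD_some] at h5
    rw [h5]
  have Tx : ∀ x, x < q → T[x]? = T[(x + g) % q]? := by
    intro x hx
    obtain ⟨j, hj⟩ := hsolveq x hx
    have h5 := hbg j
    have e2 : (t₂ + (j + g)) % q = (x + g) % q := by
      have : (t₂ + j) % q = x % q := by rw [hj, Nat.mod_eq_of_lt hx]
      have h6 : (t₂ + j) + g ≡ x + g [MOD q] := Nat.ModEq.add_right g this
      rw [← Nat.add_assoc]
      exact h6
    simp only [hβ, ← hgdef, e2, hj] at h5
    rw [List.getElem?_eq_getElem hx,
      List.getElem?_eq_getElem (Nat.mod_lt _ hq0 : (x + g) % q < q)] at h5 ⊢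
    simp only [Option.getD_some] at h5
    rw [h5]
  have Smod : ∀ x, x < p → S[x]? = S[x % g]? := by
    intro x
    induction x using Nat.strong_induction_on with
    | _ x ih =>
      intro hx
      rcases lt_or_ge x g with h | h
      · rw [Nat.mod_eq_of_lt h]
      · have h1 : x - g < p := by omega
        have h2 := Sx (x - g) h1
        have h3 : (x - g + g) % p = x := by
          rw [show x - g + g = x by omega, Nat.mod_eq_of_lt hx]
        rw [h3] at h2
        rw [← h2, ih (x - g) (by omega) h1, Nat.mod_eq_sub_mod h]
  have Tmod : ∀ x, x < q → T[x]? = T[x % g]? := by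
    intro x
    induction x using Nat.strong_induction_on with
    | _ x ih =>
      intro hx
      rcases lt_or_ge x g with h | h
      · rw [Nat.mod_eq_of_lt h]
      · have h1 : x - g < q := by omega
        have h2 := Tx (x - g) h1
        have h3 : (x - g + g) % q = x := by
          rw [show x - g + g = x by omega, Nat.mod_eq_of_lt hx]
        rw [h3] at h2
        rw [← h2, ih (x - g) (by omega) h1, Nat.mod_eq_sub_mod h]
  set E := S.take g with hE
  set F := T.take g with hF
  have hlE : E.length = g := by rw [hE, List.length_take]; omega
  have hlF : F.length = g := by rw [hF, List.length_take]; omega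
  have hrepS : S = rep (p / g) E := by
    apply List.ext_getElem?
    intro i
    rcases lt_or_ge i p with hi | hi
    · rw [getElem?_rep (by omega) (by rw [hlE, Nat.div_mul_cancel hgp]; exact hi), hlE,
        Smod i hi, hE, getElem?_take' (Nat.mod_lt _ hg0)]
    · rw [List.getElem?_eq_none (by omega : S.length ≤ i),
        List.getElem?_eq_none (by rw [length_rep, hlE, Nat.div_mul_cancel hgp]; omega)]
  have hrepT : T = rep (q / g) F := by
    apply List.ext_getElem?
    intro i
    rcases lt_or_ge i q with hi | hi
    · rw [getElem?_rep (by omega) (by rw [hlF, Nat.div_mul_cancel hgq]; exact hi), hlF,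
        Tmod i hi, hF, getElem?_take' (Nat.mod_lt _ hg0)]
    · rw [List.getElem?_eq_none (by omega : T.length ≤ i),
        List.getElem?_eq_none (by rw [length_rep, hlF, Nat.div_mul_cancel hgq]; omega)]
  -- the rotation offset
  set D := t₁ + (g - t₂ % g) with hD
  set δ := D % g with hδ
  have hδg : δ < g := Nat.mod_lt _ hg0
  have cross : ∀ mm, mm < g → F[mm]? = E[(mm + δ) % g]? := by
    intro mm hmm
    set j := mm + (g - t₂ % g) with hj
    have h5 := heq j
    have e2 : (t₂ + j) % g = mm := by
      have hdm := Nat.mod_add_div t₂ g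
      have hrg : t₂ % g < g := Nat.mod_lt _ hg0
      obtain ⟨gk, hgk⟩ : ∃ c, g * (t₂ / g) = c := ⟨_, rfl⟩
      rw [hgk] at hdm
      have h3 : t₂ + j = mm + (gk + g) := by omega
      rw [h3, ← hgk, show mm + (g * (t₂ / g) + g) = mm + g * (t₂ / g + 1) by ring,
        Nat.add_mul_mod_self_left, Nat.mod_eq_of_lt hmm]
    have e3 : (t₁ + j) % g = (mm + δ) % g := by
      have h3 : t₁ + j = mm + D := by rw [hD, hj]; ring
      rw [h3, Nat.add_mod mm D, ← hδ, Nat.mod_eq_of_lt hmm]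
    simp only [hα, hβ] at h5
    -- reduce both sides mod g
    have hxp : (t₁ + j) % p < p := Nat.mod_lt _ hp0
    have hxq : (t₂ + j) % q < q := Nat.mod_lt _ hq0
    have r1 : S[(t₁ + j) % p]? = S[(t₁ + j) % g]? := by
      rw [Smod _ hxp, Nat.mod_mod_of_dvd _ hgp]
    have r2 : T[(t₂ + j) % q]? = T[(t₂ + j) % g]? := by
      rw [Tmod _ hxq, Nat.mod_mod_of_dvd _ hgq]
    rw [r1, r2] at h5
    rw [e2, e3] at h5
    have hmmq : mm < q := by omega
    have hmdg : (mm + δ) % g < g := Nat.mod_lt _ hg0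
    have hmdp : (mm + δ) % g < p := by omega
    rw [List.getElem?_eq_getElem (by omega : (mm + δ) % g < S.length),
      List.getElem?_eq_getElem (by omega : mm < T.length)] at h5
    simp only [Option.getD_some] at h5
    rw [hF, getElem?_take' hmm, hE, getElem?_take' hmdg,
      List.getElem?_eq_getElem (by omega : mm < T.length),
      List.getElem?_eq_getElem (by omega : (mm + δ) % g < S.length), h5]
  have hrot : F = E.rotate δ := by
    apply List.ext_getElem?
    intro i
    rcases lt_or_ge i g with hi | hi
    · rw [cross i hi, List.getElem?_rotate (by rw [hlE]; exact hi), hlE]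
    · rw [List.getElem?_eq_none (by omega : F.length ≤ i),
        List.getElem?_eq_none (by rw [List.length_rotate, hlE]; omega)]
  refine ⟨E.take δ, E.drop δ, ?_, ?_, ?_⟩
  · rw [List.take_append_drop, hlE]
  · rw [List.take_append_drop]; exact hrepS
  · rw [← List.rotate_eq_drop_append_take (by rw [hlE]; omega), ← hrot]
    exact hrepT

end CFL

/-! ### Free product side -/

def CycGood (L : List (Σ i, G i)) : Prop := Good (L ++ L)

theorem good_nil : Good ([] : List (Σ i, G i)) := ⟨List.isChain_nil, by simp⟩

theorem CycGood.good {L : List (Σ i, G i)} (h : CycGood L) : Good L := h.append_left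

theorem cyc_boundary {L : List (Σ i, G i)} (h : CycGood L) :
    ∀ x ∈ L.getLast?, ∀ y ∈ L.head?, x.1 ≠ y.1 :=
  (List.isChain_append.mp h.1).2.2

theorem rep_nil (k : ℕ) : rep k ([] : List (Σ i, G i)) = [] := by
  induction k with
  | zero => rfl
  | succ n ih => rw [rep_succ, ih]; rfl

theorem mem_rep {x : Σ i, G i} {k : ℕ} {L : List (Σ i, G i)} (h : x ∈ rep k L) : x ∈ L := by
  induction k with
  | zero => simp [rep_zero] at h
  | succ n ih =>
    rw [rep_succ] at h
    rcases List.mem_append.mp h with h1 | h1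
    · exact h1
    · exact ih h1

theorem good_rep {L : List (Σ i, G i)} (h : CycGood L) (k : ℕ) : Good (rep k L) := by
  rcases eq_or_ne L [] with rfl | hL
  · rw [rep_nil]; exact good_nil
  induction k with
  | zero => exact good_nil
  | succ n ih =>
    rw [rep_succ]
    refine ⟨List.isChain_append.mpr ⟨h.good.1, ih.1, ?_⟩, ?_⟩
    · intro x hx y hy
      cases n with
      | zero => simp [rep_zero] at hy
      | succ m =>
        rw [rep_succ, List.head?_append_of_ne_nil _ hL] at hy
        exact cyc_boundary h x hx y hy
    · intro z hz
      rcases List.mem_append.mp hz with h1 | h1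
      · exact h.good.2 z h1
      · exact h.good.2 z (mem_rep h1)

theorem redList_pow {w : CoprodI G} (h : CycGood (redList w)) (k : ℕ) :
    redList (w ^ k) = rep k (redList w) := by
  induction k with
  | zero => rw [pow_zero, rep_zero, redList_one]
  | succ n ih =>
    have hrw : rep n (redList w) ++ redList w = rep (n+1) (redList w) := by
      rw [rep_add n 1, rep_one]
    have hgood : Good (redList (w ^ n) ++ redList w) := by
      rw [ih, hrw]
      exact good_rep h (n+1)
    rw [pow_succ, redList_mul_of_good hgood, ih, hrw]

theorem cyclicLength_le (w g : CoprodI G) : cyclicLength w ≤ len (g⁻¹ * w * g) :=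
  Nat.sInf_le ⟨g, rfl⟩

theorem cyclicLength_le_len (w : CoprodI G) : cyclicLength w ≤ len w := by
  have := cyclicLength_le w 1
  simpa using this

theorem cyclicLength_exists (w : CoprodI G) : ∃ g, len (g⁻¹ * w * g) = cyclicLength w := by
  have hne : (Set.range fun g : CoprodI G => len (g⁻¹ * w * g)).Nonempty :=
    Set.range_nonempty _
  exact Nat.sInf_mem hne

theorem cyclicLength_conj (w a : CoprodI G) : cyclicLength (a⁻¹ * w * a) = cyclicLength w := by
  apply le_antisymm
  · obtain ⟨g, hg⟩ := cyclicLength_exists w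
    rw [← hg]
    have h : (a⁻¹ * g)⁻¹ * (a⁻¹ * w * a) * (a⁻¹ * g) = g⁻¹ * w * g := by group
    have := cyclicLength_le (a⁻¹ * w * a) (a⁻¹ * g)
    rwa [h] at this
  · obtain ⟨g, hg⟩ := cyclicLength_exists (a⁻¹ * w * a)
    rw [← hg]
    have h : g⁻¹ * (a⁻¹ * w * a) * g = (a * g)⁻¹ * w * (a * g) := by group
    rw [h]
    exact cyclicLength_le w (a * g)

theorem cycGood_of_cyclicallyReduced {w : CoprodI G} (h1 : w ≠ 1)
    (h2 : len w = cyclicLength w) (h3 : 2 ≤ len w) : CycGood (redList w) := by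
  have hgood : Good (redList w) := good_redList w
  refine ⟨List.isChain_append.mpr ⟨hgood.1, hgood.1, ?_⟩, ?_⟩
  swap
  · intro z hz
    rcases List.mem_append.mp hz with hh | hh <;> exact hgood.2 z hh
  intro x hx y hy hxy
  rcases hLw : redList w with _ | ⟨a, rest⟩
  · rw [hLw] at hy; simp at hy
  rcases List.eq_nil_or_concat rest with rfl | ⟨M, z, hrest⟩
  · have hlen1 : len w = 1 := by unfold len; rw [hLw]; rfl
    omega
  subst hrest
  rw [List.concat_eq_append] at hLw
  have hy' : y = a := by rw [hLw] at hy; exact (by simpa using hy : a = y).symm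
  have hx' : x = z := by
    rw [hLw, show a :: (M ++ [z]) = (a :: M) ++ [z] by simp, List.getLast?_concat] at hx
    exact (by simpa using hx : z = x).symm
  subst hy'
  subst hx'
  obtain ⟨i, a₂⟩ := y
  obtain ⟨iz, z₂⟩ := x
  have hiz : iz = i := hxy
  subst hiz
  rw [hLw] at hgood
  have hgoodaM : Good (⟨iz,a₂⟩ :: M) := by
    have he : (⟨iz,a₂⟩ :: (M ++ [⟨iz,z₂⟩]) : List (Σ i, G i)) = (⟨iz,a₂⟩ :: M) ++ [⟨iz,z₂⟩] := by
      simp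
    rw [he] at hgood
    exact hgood.append_left
  have hgoodM : Good M := hgoodaM.tail
  have hw : w = CoprodI.of a₂ * (eprod M * CoprodI.of z₂) := by
    conv_lhs => rw [← eprod_redList w, hLw, eprod_cons', eprod_append, eprod_singleton']
  set w' := CoprodI.of z₂ * w * (CoprodI.of z₂)⁻¹ with hw'
  have hw'2 : w' = CoprodI.of (z₂ * a₂) * eprod M := by
    rw [hw', hw, map_mul]
    group
  have hlenw : len w = M.length + 2 := by unfold len; rw [hLw]; simp
  have hcle : cyclicLength w ≤ len w' := by
    have h := cyclicLength_le w (CoprodI.of z₂)⁻¹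
    rwa [inv_inv] at h
  have hlt : len w' < len w := by
    by_cases hza : z₂ * a₂ = 1
    · have hlw' : w' = eprod M := by rw [hw'2, hza, map_one, one_mul]
      have hl2 : len w' = M.length := by rw [hlw']; unfold len; rw [redList_eprod hgoodM]
      omega
    · have hgood2 : Good (⟨iz, z₂*a₂⟩ :: M) := by
        refine ⟨?_, ?_⟩
        · cases M with
          | nil => exact List.isChain_singleton _
          | cons b M' =>
            exact List.isChain_cons_cons.mpr ⟨(List.isChain_cons_cons.mp hgoodaM.1).1,
              (List.isChain_cons_cons.mp hgoodaM.1).2⟩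
        · intro u hu
          rcases List.mem_cons.mp hu with hh | hh
          · subst hh; exact hza
          · exact hgoodM.2 u hh
      have : w' = eprod (⟨iz, z₂*a₂⟩ :: M) := by rw [hw'2, eprod_cons']
      have hl2 : len w' = M.length + 1 := by
        rw [this]; unfold len; rw [redList_eprod hgood2]; simp
      omega
  omega

theorem suf_aux : ∀ (n : ℕ) (gg u : CoprodI G), len gg = n →
    ∃ (l : List (Σ i, G i)) (d : ℕ), d ≤ n + 1 ∧ l.length ≤ n ∧
      redList (gg * u) = l ++ (redList u).drop d := by
  intro n
  induction n using Nat.strong_induction_on with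
  | _ n ih =>
    intro gg u hn
    rcases List.eq_nil_or_concat (redList gg) with hL | ⟨M, ⟨j,y⟩, hL⟩
    · refine ⟨[], 0, by omega, by simp, ?_⟩
      rw [eq_one_of_redList_nil hL, one_mul]
      simp
    · rw [List.concat_eq_append] at hL
      have hgood : Good (M ++ [⟨j,y⟩]) := hL ▸ good_redList gg
      have hgg : gg = eprod M * CoprodI.of y := by
        conv_lhs => rw [← eprod_redList gg, hL, eprod_append, eprod_singleton']
      have hMlen : len (eprod M) = M.length := by
        unfold len; rw [redList_eprod hgood.append_left]
      have hlenM : M.length + 1 = n := by rw [← hn]; unfold len; rw [hL]; simp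
      obtain ⟨l₀, d₀, hd₀, hl₀, h₀⟩ := suf_one y u
      obtain ⟨l', d', hd', hl', h'⟩ :=
        ih M.length (by omega) (eprod M) (CoprodI.of y * u) hMlen
      refine ⟨l' ++ l₀.drop d', d₀ + (d' - l₀.length), by omega,
        by rw [List.length_append]; have := List.length_drop (i := d') (l := l₀); omega, ?_⟩
      rw [hgg, mul_assoc, h', h₀, List.drop_append, List.drop_drop,
        List.append_assoc]

theorem pre_aux : ∀ (n : ℕ) (gg u : CoprodI G), len gg = n →
    ∃ (l : List (Σ i, G i)) (m : ℕ), (redList u).length ≤ m + n + 1 ∧ l.length ≤ n ∧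
      redList (u * gg) = (redList u).take m ++ l := by
  intro n
  induction n using Nat.strong_induction_on with
  | _ n ih =>
    intro gg u hn
    rcases hL : redList gg with _ | ⟨⟨j, y⟩, M⟩
    · refine ⟨[], (redList u).length, by omega, by simp, ?_⟩
      rw [eq_one_of_redList_nil hL, mul_one]
      simp
    · have hgood : Good (⟨j,y⟩ :: M) := hL ▸ good_redList gg
      have hgg : gg = CoprodI.of y * eprod M := by
        conv_lhs => rw [← eprod_redList gg, hL, eprod_cons']
      have hMlen : len (eprod M) = M.length := by
        unfold len; rw [redList_eprod hgood.tail]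
      have hlenM : M.length + 1 = n := by rw [← hn]; unfold len; rw [hL]; simp
      obtain ⟨l₀, n₀, hn₀, hl₀, h₀⟩ := pre_one y u
      obtain ⟨l', m', hm', hl', h'⟩ :=
        ih M.length (by omega) (eprod M) (u * CoprodI.of y) hMlen
      have hlen0 : (redList (u * CoprodI.of y)).length =
          ((redList u).take n₀).length + l₀.length := by rw [h₀]; simp
      have htt : ((redList u).take n₀).length = min n₀ (redList u).length :=
        List.length_take
      refine ⟨l₀.take (m' - ((redList u).take n₀).length) ++ l', min m' n₀, by omega,
        by rw [List.length_append]; have := List.length_take (i := m' - ((redList u).take n₀).length) (l := l₀); omega, ?_⟩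
      rw [hgg, ← mul_assoc, h', h₀, List.take_append, List.take_take,
        List.append_assoc]

theorem radical_period (w : CoprodI G) (hw1 : w ≠ 1) (hw2 : len w = cyclicLength w)
    (hc : 2 ≤ cyclicLength w) :
    ∃ D : List (Σ i, G i),
      D.length = Nat.gcd (len w) (radicalLength w) ∧
      redList w = rep (len w / Nat.gcd (len w) (radicalLength w)) D := by
  have hSne : {n | ∃ (h : CoprodI G) (k : ℕ), 0 < k ∧ w = h ^ k ∧ n = cyclicLength h}.Nonempty :=
    ⟨cyclicLength w, w, 1, one_pos, (pow_one w).symm, rfl⟩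
  obtain ⟨h, k, hk, hwk, hr⟩ := Nat.sInf_mem hSne
  set r := radicalLength w with hrdef
  have hr' : r = cyclicLength h := hr
  obtain ⟨g₀, hg₀⟩ := cyclicLength_exists h
  set h₀ := g₀⁻¹ * h * g₀ with hh₀
  have hlenh₀ : len h₀ = r := by rw [hg₀, ← hr']
  have hhconj : h = g₀ * h₀ * g₀⁻¹ := by rw [hh₀]; group
  have hw_conj : ∀ N : ℕ, w ^ N = g₀ * h₀ ^ (k * N) * g₀⁻¹ := by
    intro N
    rw [hwk, hhconj, ← pow_mul, conj_pow]
  have hw1' : w = g₀ * h₀ ^ k * g₀⁻¹ := by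
    have := hw_conj 1
    rwa [pow_one, mul_one] at this
  have hcyc_w_h : cyclicLength w = cyclicLength (h₀ ^ k) := by
    have : w = (g₀⁻¹)⁻¹ * h₀ ^ k * g₀⁻¹ := by rw [hw1']; group
    rw [this, cyclicLength_conj]
  have hh₀ne : h₀ ≠ 1 := by
    intro hcon
    apply hw1
    rw [hw1', hcon, one_pow, mul_one, mul_inv_cancel]
  have hr0 : r ≠ 0 := by
    intro hcon
    apply hh₀ne
    apply eq_one_of_redList_nil
    have : (redList h₀).length = 0 := by
      have := hlenh₀; unfold len at this; omega
    exact List.length_eq_zero_iff.mp this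
  have hr2 : 2 ≤ r := by
    rcases Nat.lt_or_ge r 2 with hlt | hge
    · exfalso
      have hr1 : r = 1 := by omega
      obtain ⟨x, hx⟩ := List.length_eq_one_iff.mp (by
        have := hlenh₀; unfold len at this; omega :
        (redList h₀).length = 1)
      have hh₀x : h₀ = CoprodI.of x.2 := by
        conv_lhs => rw [← eprod_redList h₀, hx, eprod_singleton]
      have hpow : h₀ ^ k = CoprodI.of (x.2 ^ k) := by rw [hh₀x, map_pow]
      have hlenle : len (h₀ ^ k) ≤ 1 := by rw [hpow]; exact len_of_le _
      have := cyclicLength_le_len (h₀ ^ k)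
      omega
    · exact hge
  -- h₀ is cyclically reduced
  have hcych₀ : len h₀ = cyclicLength h₀ := by
    rw [hlenh₀, hr', hh₀, cyclicLength_conj]
  have hcgR : CycGood (redList h₀) :=
    cycGood_of_cyclicallyReduced hh₀ne hcych₀ (by omega)
  have hcgL : CycGood (redList w) :=
    cycGood_of_cyclicallyReduced hw1 hw2 (by omega)
  set L := redList w with hLdef
  set R := redList h₀ with hRdef
  have hn2 : 2 ≤ L.length := by
    have : len w = L.length := rfl
    omega
  set n := L.length with hndef
  set N := n + r + len g₀ + len g₀⁻¹ + 2 with hNdef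
  have hX : redList (h₀ ^ (k * N)) = rep (k * N) R := redList_pow hcgR (k * N)
  set X := rep (k * N) R with hXdef
  have hlenX : X.length = k * N * r := by
    rw [hXdef, length_rep]
    have : R.length = r := by rw [hRdef, ← hlenh₀]; rfl
    rw [this]
  -- PRE then SUF
  obtain ⟨l, m, hm, hl, hpre⟩ := pre_aux (len g₀⁻¹) g₀⁻¹ (h₀ ^ (k * N)) rfl
  rw [hX] at hpre hm
  obtain ⟨l₂, d, hd, hl₂, hsuf⟩ := suf_aux (len g₀) g₀ (h₀ ^ (k * N) * g₀⁻¹) rfl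
  rw [hpre] at hsuf
  have hwN : redList (w ^ N) = rep N L := redList_pow hcgL N
  have hgN : g₀ * (h₀ ^ (k * N) * g₀⁻¹) = w ^ N := by rw [hw_conj N]; group
  rw [hgN, hwN] at hsuf
  rw [List.drop_append] at hsuf
  set F := (X.take m).drop d with hFdef
  have hlenF : n + r ≤ F.length := by
    rw [hFdef, List.length_drop, List.length_take]
    have h1 : N ≤ k * N * r := by
      have hk1 : 1 ≤ k := hk
      have hr1 : 1 ≤ r := by omega
      calc N = 1 * N * 1 := by ring
      _ ≤ k * N * r := by
        apply Nat.mul_le_mul (Nat.mul_le_mul hk1 le_rfl) hr1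
    omega
  -- F is a factor of rep N L
  have hfac1 : ∃ l1 l2, rep N L = l1 ++ F ++ l2 :=
    ⟨l₂, l.drop (d - (X.take m).length), by rw [hsuf, List.append_assoc]⟩
  -- F is a factor of X = rep (k*N) R
  have hfac2 : ∃ l1 l2, rep (k * N) R = l1 ++ F ++ l2 := by
    refine ⟨(X.take m).take d, X.drop m, ?_⟩
    have e1 : (X.take m).take d ++ F = X.take m := by
      rw [hFdef]; exact List.take_append_drop d (X.take m)
    calc rep (k*N) R = X := rfl
    _ = X.take m ++ X.drop m := (List.take_append_drop m X).symm
    _ = ((X.take m).take d ++ F) ++ X.drop m := by rw [e1]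
  have hRlen : R.length = r := by
    have : len h₀ = R.length := rfl
    omega
  have hL0 : L ≠ [] := by
    intro hcon
    rw [hndef, hcon] at hn2
    simp at hn2
  have hR0 : R ≠ [] := by
    intro hcon
    rw [hcon] at hRlen
    simp at hRlen
    omega
  obtain ⟨C₁, C₂, hCl, hCS, _⟩ := cfl hL0 hR0 hfac1 hfac2
    (by rw [hRlen]; omega)
  rw [hRlen] at hCl hCS
  have hlw : len w = L.length := rfl
  refine ⟨C₁ ++ C₂, ?_, ?_⟩
  · rw [hlw, hCl]
  · rw [hlw]
    exact hCS

theorem two_mul_le_of_dvd {p r : ℕ} (h : p ∣ r) (hne : p ≠ r) (hr : 0 < r) : 2 * p ≤ r := by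
  obtain ⟨k, rfl⟩ := h
  match k with
  | 0 => omega
  | 1 => omega
  | (k+2) =>
    calc 2 * p = p * 2 := by ring
    _ ≤ p * (k + 2) := Nat.mul_le_mul_left _ (by omega)

theorem arith_gcd {p₁ p₂ r₁ r₂ : ℕ} (h₁ : p₁ ∣ r₁) (h₂ : p₂ ∣ r₂)
    (hp₁ : 0 < p₁) (hp₂ : 0 < p₂) (hr₁ : 0 < r₁) (hr₂ : 0 < r₂) :
    p₁ + p₂ - Nat.gcd p₁ p₂ ≤ r₁ + r₂ - Nat.gcd r₁ r₂ := by
  set G := Nat.gcd r₁ r₂ with hGdef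
  set gp := Nat.gcd p₁ p₂ with hgpdef
  have hgp1 : gp ≤ p₁ := Nat.le_of_dvd hp₁ (Nat.gcd_dvd_left _ _)
  have hgp2 : gp ≤ p₂ := Nat.le_of_dvd hp₂ (Nat.gcd_dvd_right _ _)
  have hgp0 : 0 < gp := Nat.gcd_pos_of_pos_left _ hp₁
  have hG1 : G ∣ r₁ := Nat.gcd_dvd_left _ _
  have hG2 : G ∣ r₂ := Nat.gcd_dvd_right _ _
  have hGle1 : G ≤ r₁ := Nat.le_of_dvd hr₁ hG1
  have hGle2 : G ≤ r₂ := Nat.le_of_dvd hr₂ hG2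
  have hple1 : p₁ ≤ r₁ := Nat.le_of_dvd hr₁ h₁
  have hple2 : p₂ ≤ r₂ := Nat.le_of_dvd hr₂ h₂
  rcases eq_or_ne p₁ r₁ with he₁ | hne₁
  · rcases eq_or_ne p₂ r₂ with he₂ | hne₂
    · subst he₁; subst he₂; exact le_rfl
    · have h2p₂ := two_mul_le_of_dvd h₂ hne₂ hr₂
      rcases eq_or_ne G r₂ with heG | hneG
      · have hd : p₂ ∣ gp := by
          refine Nat.dvd_gcd ?_ dvd_rfl
          rw [he₁]
          exact dvd_trans (heG ▸ h₂) hG1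
        have := Nat.le_of_dvd hgp0 hd
        omega
      · have h2G : 2 * G ≤ r₂ := two_mul_le_of_dvd hG2 hneG hr₂
        omega
  · rcases eq_or_ne p₂ r₂ with he₂ | hne₂
    · have h2p₁ := two_mul_le_of_dvd h₁ hne₁ hr₁
      rcases eq_or_ne G r₁ with heG | hneG
      · have hd : p₁ ∣ gp := by
          refine Nat.dvd_gcd dvd_rfl ?_
          rw [he₂]
          exact dvd_trans (heG ▸ h₁) hG2
        have := Nat.le_of_dvd hgp0 hd
        omega
      · have h2G : 2 * G ≤ r₁ := two_mul_le_of_dvd hG1 hneG hr₁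
        omega
    · have h2p₁ := two_mul_le_of_dvd h₁ hne₁ hr₁
      have h2p₂ := two_mul_le_of_dvd h₂ hne₂ hr₂
      omega

theorem radicalLength_pos {w : CoprodI G} (hw : w ≠ 1) : 0 < radicalLength w := by
  have hSne : {n | ∃ (h : CoprodI G) (k : ℕ), 0 < k ∧ w = h ^ k ∧ n = cyclicLength h}.Nonempty :=
    ⟨cyclicLength w, w, 1, one_pos, (pow_one w).symm, rfl⟩
  obtain ⟨h, k, hk, hwk, hr⟩ := Nat.sInf_mem hSne
  have hr' : radicalLength w = cyclicLength h := hr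
  rw [hr']
  rcases Nat.eq_zero_or_pos (cyclicLength h) with h0 | h0
  · exfalso
    obtain ⟨g, hg⟩ := cyclicLength_exists h
    rw [h0] at hg
    have hnil : (redList (g⁻¹ * h * g)).length = 0 := hg
    have h1 : g⁻¹ * h * g = 1 := eq_one_of_redList_nil (List.length_eq_zero_iff.mp hnil)
    have hh1 : h = 1 := by
      have h2 : h = g * (g⁻¹ * h * g) * g⁻¹ := by group
      rw [h2, h1, mul_one, mul_inv_cancel]
    exact hw (by rw [hwk, hh1, one_pow])
  · exact h0


/-- **Fine–Wilf theorem for free products.** If `w₁, w₂` are cyclically reduced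
with `|w₁|_c, |w₂|_c ≥ 2` and a word `U` is a subword of both `w₁^{k₁}` and
`w₂^{k₂}` with `|U| ≥ |w₁|_r + |w₂|_r − gcd(|w₁|_r, |w₂|_r)`, then there are
reduced words `C₁, C₂` with `w₁ ≡ (C₁ ⬝ C₂)^{m₁}` and `w₂ ≡ (C₂ ⬝ C₁)^{m₂}`
for some positive `m₁, m₂`. -/
theorem fine_wilf_free_products
    {ι : Type*} [Nontrivial ι] {G : ι → Type*} [∀ i, Group (G i)]
    (hG : ∀ i, Nontrivial (G i))
    (w₁ w₂ : Monoid.CoprodI G)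
    (hw₁ : IsCyclicallyReduced w₁) (hw₂ : IsCyclicallyReduced w₂)
    (hc₁ : 2 ≤ cyclicLength w₁) (hc₂ : 2 ≤ cyclicLength w₂)
    (U : Monoid.CoprodI G) (k₁ k₂ : ℕ) (hk₁ : 0 < k₁) (hk₂ : 0 < k₂)
    (hU₁ : IsSubword U (w₁ ^ k₁)) (hU₂ : IsSubword U (w₂ ^ k₂))
    (hlen : radicalLength w₁ + radicalLength w₂ -
        Nat.gcd (radicalLength w₁) (radicalLength w₂) ≤ len U) :
    ∃ (C₁ C₂ : Monoid.CoprodI G) (m₁ m₂ : ℕ), 0 < m₁ ∧ 0 < m₂ ∧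
      redList w₁ = (List.replicate m₁ (redList C₁ ++ redList C₂)).flatten ∧
      redList w₂ = (List.replicate m₂ (redList C₂ ++ redList C₁)).flatten := by
  obtain ⟨hne₁, hcr₁⟩ := hw₁
  obtain ⟨hne₂, hcr₂⟩ := hw₂
  have hlw₁ : 2 ≤ len w₁ := by omega
  have hlw₂ : 2 ≤ len w₂ := by omega
  obtain ⟨D₁, hD₁len, hD₁⟩ := radical_period w₁ hne₁ hcr₁ hc₁
  obtain ⟨D₂, hD₂len, hD₂⟩ := radical_period w₂ hne₂ hcr₂ hc₂
  set r₁ := radicalLength w₁ with hr₁def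
  set r₂ := radicalLength w₂ with hr₂def
  set n₁ := len w₁ with hn₁def
  set n₂ := len w₂ with hn₂def
  set p₁ := Nat.gcd n₁ r₁ with hp₁def
  set p₂ := Nat.gcd n₂ r₂ with hp₂def
  have hr₁pos : 0 < r₁ := radicalLength_pos hne₁
  have hr₂pos : 0 < r₂ := radicalLength_pos hne₂
  have hn₁pos : 0 < n₁ := by omega
  have hn₂pos : 0 < n₂ := by omega
  have hp₁pos : 0 < p₁ := Nat.gcd_pos_of_pos_left _ hn₁pos
  have hp₂pos : 0 < p₂ := Nat.gcd_pos_of_pos_left _ hn₂pos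
  have hp₁n : p₁ ∣ n₁ := Nat.gcd_dvd_left _ _
  have hp₂n : p₂ ∣ n₂ := Nat.gcd_dvd_left _ _
  have hp₁r : p₁ ∣ r₁ := Nat.gcd_dvd_right _ _
  have hp₂r : p₂ ∣ r₂ := Nat.gcd_dvd_right _ _
  -- transport the subword hypotheses to powers of D₁, D₂
  have hcgL₁ : CycGood (redList w₁) := cycGood_of_cyclicallyReduced hne₁ hcr₁ hlw₁
  have hcgL₂ : CycGood (redList w₂) := cycGood_of_cyclicallyReduced hne₂ hcr₂ hlw₂
  obtain ⟨l1, l2, hU1⟩ := hU₁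
  obtain ⟨l3, l4, hU2⟩ := hU₂
  rw [redList_pow hcgL₁ k₁, hD₁, ← rep_mul] at hU1
  rw [redList_pow hcgL₂ k₂, hD₂, ← rep_mul] at hU2
  have hD₁ne : D₁ ≠ [] := by
    intro hcon; rw [hcon] at hD₁len; simp at hD₁len; omega
  have hD₂ne : D₂ ≠ [] := by
    intro hcon; rw [hcon] at hD₂len; simp at hD₂len; omega
  have harr := arith_gcd hp₁r hp₂r hp₁pos hp₂pos hr₁pos hr₂pos
  have hlenU : len U = (redList U).length := rfl
  obtain ⟨C₁, C₂, hClen, hS, hT⟩ := cfl hD₁ne hD₂ne ⟨l1, l2, hU1⟩ ⟨l3, l4, hU2⟩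
    (by rw [hD₁len, hD₂len]; omega)
  rw [hD₁len, hD₂len] at hClen hS hT
  set g := Nat.gcd p₁ p₂ with hgdef
  have hg0 : 0 < g := Nat.gcd_pos_of_pos_left _ hp₁pos
  have hgp₁ : g ∣ p₁ := Nat.gcd_dvd_left _ _
  have hgp₂ : g ∣ p₂ := Nat.gcd_dvd_right _ _
  -- C₁ and C₂ are good
  have hq₁pos : 0 < n₁ / p₁ := Nat.div_pos (Nat.le_of_dvd hn₁pos hp₁n) hp₁pos
  have hq₂pos : 0 < n₂ / p₂ := Nat.div_pos (Nat.le_of_dvd hn₂pos hp₂n) hp₂pos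
  have hs₁pos : 0 < p₁ / g := Nat.div_pos (Nat.le_of_dvd hp₁pos hgp₁) hg0
  have hs₂pos : 0 < p₂ / g := Nat.div_pos (Nat.le_of_dvd hp₂pos hgp₂) hg0
  have hw₁rep : redList w₁ = rep ((n₁ / p₁) * (p₁ / g)) (C₁ ++ C₂) := by
    rw [hD₁, hS, ← rep_mul]
  have hw₂rep : redList w₂ = rep ((n₂ / p₂) * (p₂ / g)) (C₂ ++ C₁) := by
    rw [hD₂, hT, ← rep_mul]
  have hm₁pos : 0 < (n₁ / p₁) * (p₁ / g) := Nat.mul_pos hq₁pos hs₁pos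
  have hgoodC : Good (C₁ ++ C₂) := by
    have : redList w₁ = (C₁ ++ C₂) ++ rep ((n₁ / p₁) * (p₁ / g) - 1) (C₁ ++ C₂) := by
      rw [hw₁rep, ← rep_succ, Nat.sub_add_cancel hm₁pos]
    exact (this ▸ good_redList w₁).append_left
  have hgoodC₁ : Good C₁ := hgoodC.append_left
  have hgoodC₂ : Good C₂ := hgoodC.append_right
  refine ⟨eprod C₁, eprod C₂, (n₁ / p₁) * (p₁ / g), (n₂ / p₂) * (p₂ / g),
    hm₁pos, Nat.mul_pos hq₂pos hs₂pos, ?_, ?_⟩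
  · rw [redList_eprod hgoodC₁, redList_eprod hgoodC₂]
    exact hw₁rep
  · rw [redList_eprod hgoodC₁, redList_eprod hgoodC₂]
    exact hw₂rep


end FreeProdPaper
end

section
/- Let H = ∗_{a∈A} H_a be a nontrivial free product and let B ∈ H be a simple word. If a word U with U ≡ B occurs as a subword of B^k for some positive integer k, then B^k ≡ B^m · U · B^{k−m−1} for some m ∈ {0,…,k−1}; that is, every occurrence of B as a subword of B^k is at a position that is a multiple of |B|. -/
/-!
Common definitions: we model a nontrivial free product `H = ∗_{a ∈ A} H_a` as
`Monoid.CoprodI G` for a family of groups `G : ι → Type*` with `[Nontrivial ι]`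
(the index set has at least two elements) and `∀ i, Nontrivial (G i)`
(all factors are nontrivial groups).
-/

namespace FreeProdPaper

open Monoid

variable {ι : Type*} {G : ι → Type*} [∀ i, Group (G i)]

lemma length_flatten_replicate {α : Type*} (m : ℕ) (L : List α) :
    ((List.replicate m L).flatten).length = m * L.length := by
  simp [List.length_flatten, Nat.mul_comm]

lemma getElem_flatten_replicate {α : Type*} (m : ℕ) (L : List α) (j : ℕ)
    (hL : L ≠ []) (h : j < ((List.replicate m L).flatten).length) :
    ((List.replicate m L).flatten)[j] =
      L[j % L.length]'(Nat.mod_lt _ (List.length_pos_iff.mpr hL)) := by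
  induction m generalizing j with
  | zero => simp at h
  | succ m ih =>
    have heq : (List.replicate (m+1) L).flatten = L ++ (List.replicate m L).flatten := by
      rw [List.replicate_succ, List.flatten_cons]
    rw [List.getElem_of_eq heq]
    rcases lt_or_ge j L.length with hj | hj
    · rw [List.getElem_append_left hj]
      congr 1
      exact (Nat.mod_eq_of_lt hj).symm
    · rw [List.getElem_append_right hj]
      have h2 : j - L.length < ((List.replicate m L).flatten).length := by
        simp only [length_flatten_replicate, Nat.succ_mul] at h ⊢
        omega
      rw [ih (j - L.length) h2]
      congr 1
      exact (Nat.mod_eq_sub_mod hj).symm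

lemma take_flatten_replicate {α : Type*} (k q : ℕ) (L : List α) (h : q ≤ k) :
    ((List.replicate k L).flatten).take (q * L.length) = (List.replicate q L).flatten := by
  have : List.replicate k L = List.replicate q L ++ List.replicate (k - q) L := by
    rw [← List.replicate_add]; congr 1; omega
  rw [this, List.flatten_append, List.take_left' (length_flatten_replicate q L)]

lemma drop_flatten_replicate {α : Type*} (k q : ℕ) (L : List α) :
    ((List.replicate k L).flatten).drop (q * L.length) = (List.replicate (k - q) L).flatten := by
  rcases le_or_gt q k with h | h
  · have : List.replicate k L = List.replicate q L ++ List.replicate (k - q) L := by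
      rw [← List.replicate_add]; congr 1; omega
    rw [this, List.flatten_append, List.drop_left' (length_flatten_replicate q L)]
  · rw [List.drop_eq_nil_of_le, Nat.sub_eq_zero_of_le h.le]
    · simp
    · rw [length_flatten_replicate]; exact Nat.mul_le_mul_right _ h.le

lemma prod_map_flatten_replicate {α M : Type*} [Monoid M] (m : ℕ) (L : List α) (f : α → M) :
    (((List.replicate m L).flatten).map f).prod = ((L.map f).prod) ^ m := by
  induction m with
  | zero => simp
  | succ m ih =>
    rw [List.replicate_succ, List.flatten_cons, List.map_append, List.prod_append, ih, pow_succ']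

lemma chain'_flatten_replicate {α : Type*} {R : α → α → Prop} {L : List α} (k : ℕ)
    (hL : L ≠ []) (hc : List.Chain' R L)
    (hcyc : R (L.getLast hL) (L.head hL)) :
    List.Chain' R ((List.replicate k L).flatten) := by
  induction k with
  | zero => exact List.isChain_nil
  | succ k ih =>
    rw [List.replicate_succ, List.flatten_cons]
    refine List.IsChain.append hc ih ?_
    intro x hx y hy
    cases k with
    | zero => simp at hy
    | succ k =>
      have hne : ((List.replicate (k+1) L).flatten) ≠ [] := by
        rw [List.replicate_succ, List.flatten_cons]
        simp [hL]
      rw [List.getLast?_eq_getLast hL] at hx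
      have hh : ((List.replicate (k+1) L).flatten).head? = L.head? := by
        rw [List.replicate_succ, List.flatten_cons, List.head?_append_of_ne_nil _ hL]
      rw [hh, List.head?_eq_head hL] at hy
      cases Option.some_inj.mp hx
      cases Option.some_inj.mp hy
      exact hcyc

lemma bezout_mod (r n : ℕ) (hr : 0 < r) (hn : r < n) :
    ∃ t : ℕ, (t * r) % n = Nat.gcd r n := by
  have hn0 : 0 < n := lt_trans hr hn
  set d := Nat.gcd r n with hd
  have hdlt : d < n := lt_of_le_of_lt (Nat.gcd_le_left n hr) hn
  set x : ℤ := Nat.gcdA r n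
  set y : ℤ := Nat.gcdB r n
  have hb : (d : ℤ) = r * x + n * y := Nat.gcd_eq_gcd_ab r n
  refine ⟨(x % n).toNat, ?_⟩
  have hxnn : 0 ≤ x % (n : ℤ) := Int.emod_nonneg x (by exact_mod_cast hn0.ne')
  have key : (((x % n).toNat * r : ℕ) : ℤ) % n = ((d : ℤ)) % n := by
    push_cast [Int.toNat_of_nonneg hxnn]
    rw [Int.mul_emod, Int.emod_emod_of_dvd x dvd_rfl, ← Int.mul_emod]
    rw [hb, mul_comm x (r:ℤ), Int.add_mul_emod_self_left]
  have : (((x % n).toNat * r : ℕ) : ℤ) % n = (d : ℤ) := by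
    rw [key, Int.emod_eq_of_lt (by positivity) (by exact_mod_cast hdlt)]
  exact_mod_cast this

lemma getElem_idx_congr {α : Type*} (L : List α) {i j : ℕ} (h : i = j) (hi : i < L.length) :
    L[i]'hi = L[j]'(h ▸ hi) := by subst h; rfl


lemma redList_word_prod (W : Monoid.CoprodI.Word G) : redList W.prod = W.toList := by
  letI := Classical.decEq ι
  letI : ∀ i, DecidableEq (G i) := fun _ => Classical.decEq _
  have : W.prod = Monoid.CoprodI.Word.equiv.symm W := rfl
  rw [redList, this, Equiv.apply_symm_apply]

lemma prod_map_redList (w : Monoid.CoprodI G) :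
    (((redList w).map fun l => Monoid.CoprodI.of l.snd).prod) = w := by
  letI := Classical.decEq ι
  letI : ∀ i, DecidableEq (G i) := fun _ => Classical.decEq _
  exact Monoid.CoprodI.Word.equiv.symm_apply_apply w

lemma ne_one_redList (w : Monoid.CoprodI G) : ∀ l ∈ redList w, Sigma.snd l ≠ 1 := by
  letI := Classical.decEq ι
  letI : ∀ i, DecidableEq (G i) := fun _ => Classical.decEq _
  exact (Monoid.CoprodI.Word.equiv w).ne_one

lemma chain_redList (w : Monoid.CoprodI G) :
    (redList w).Chain' fun l l' => Sigma.fst l ≠ Sigma.fst l' := by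
  letI := Classical.decEq ι
  letI : ∀ i, DecidableEq (G i) := fun _ => Classical.decEq _
  exact (Monoid.CoprodI.Word.equiv w).chain_ne

lemma getLast_fst_ne_head_fst (B : Monoid.CoprodI G) (hcr : IsCyclicallyReduced B)
    (h2 : 2 ≤ (redList B).length) (hne : redList B ≠ []) :
    ((redList B).getLast hne).fst ≠ ((redList B).head hne).fst := by
  intro heq
  obtain ⟨x, L', hL⟩ := List.exists_cons_of_ne_nil hne
  rcases L'.eq_nil_or_concat with h0 | ⟨t, y, rfl⟩
  · rw [hL, h0] at h2; simp at h2
  rw [List.concat_eq_append] at hL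
  have hhead : (redList B).head hne = x := by
    have h1 : (redList B).head? = some x := by rw [hL]; rfl
    rw [List.head?_eq_head hne] at h1
    exact Option.some_inj.mp h1
  have hlast : (redList B).getLast hne = y := by
    have h1 : (redList B).getLast? = some y := by
      rw [hL, ← List.cons_append, List.getLast?_concat]
    rw [List.getLast?_eq_getLast hne] at h1
    exact Option.some_inj.mp h1
  obtain ⟨ix, a⟩ := x
  obtain ⟨iy, b⟩ := y
  rw [hhead, hlast] at heq
  dsimp at heq
  subst heq
  -- chain facts
  have hcL := chain_redList B
  rw [hL] at hcL
  have hc1 : List.Chain' (fun l l' : (Σ i, G i) => l.fst ≠ l'.fst)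
      (t ++ [(⟨iy, b⟩ : Σ i, G i)]) := hcL.tail
  have hct : t.Chain' (fun l l' : (Σ i, G i) => l.fst ≠ l'.fst) :=
    (List.isChain_append.mp hc1).1
  have hhead_t : ∀ z ∈ t.head?, iy ≠ z.fst := by
    intro z hz
    have htne : t ≠ [] := by rintro rfl; simp at hz
    refine (List.isChain_cons.mp hcL).1 z ?_
    rw [List.head?_append_of_ne_nil _ htne]
    exact hz
  have hno := ne_one_redList B
  rw [hL] at hno
  -- product decomposition
  have hBprod := prod_map_redList B
  rw [hL] at hBprod
  set T : Monoid.CoprodI G := ((t.map fun l => Monoid.CoprodI.of l.snd).prod) with hT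
  have hB : B = Monoid.CoprodI.of a * T * Monoid.CoprodI.of b := by
    rw [← hBprod]
    simp [List.map_append, mul_assoc, hT]
  -- the conjugate
  have hcval : Monoid.CoprodI.of b * B * (Monoid.CoprodI.of b)⁻¹
      = Monoid.CoprodI.of (b * a) * T := by
    rw [hB, map_mul]
    group
  have hmem : len (Monoid.CoprodI.of b * B * (Monoid.CoprodI.of b)⁻¹) ∈
      (Set.range fun g : Monoid.CoprodI G => len (g⁻¹ * B * g)) :=
    ⟨(Monoid.CoprodI.of b)⁻¹, by simp⟩
  have hle : cyclicLength B ≤ len (Monoid.CoprodI.of b * B * (Monoid.CoprodI.of b)⁻¹) :=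
    Nat.sInf_le hmem
  have hlenB : len B = t.length + 2 := by
    show (redList B).length = _
    rw [hL]; simp
  have hsmall : len (Monoid.CoprodI.of b * B * (Monoid.CoprodI.of b)⁻¹) ≤ t.length + 1 := by
    by_cases hba : b * a = 1
    · have : Monoid.CoprodI.of b * B * (Monoid.CoprodI.of b)⁻¹ = T := by
        rw [hcval, hba, map_one, one_mul]
      rw [this]
      have hT' : T = (Monoid.CoprodI.Word.prod
          ⟨t, fun l hl => hno l (by simp [hl]), hct⟩ : Monoid.CoprodI G) := rfl
      rw [hT']
      show (redList _).length ≤ _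
      rw [redList_word_prod]
      simp
    · have hw : Monoid.CoprodI.of b * B * (Monoid.CoprodI.of b)⁻¹ =
          (Monoid.CoprodI.Word.prod
            ⟨⟨iy, b * a⟩ :: t,
             by
               intro l hl
               rcases List.mem_cons.mp hl with rfl | hl
               · exact hba
               · exact hno l (by simp [hl]),
             List.isChain_cons.mpr ⟨hhead_t, hct⟩⟩ : Monoid.CoprodI G) := by
        rw [hcval]
        show _ = ((((⟨iy, b * a⟩ : Σ i, G i) :: t).map fun l => Monoid.CoprodI.of l.snd).prod)
        rw [List.map_cons, List.prod_cons]
      rw [hw]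
      show (redList _).length ≤ _
      rw [redList_word_prod]
      simp
  have := hcr.2
  omega

lemma redList_pow_s5 (B : Monoid.CoprodI G) (hcr : IsCyclicallyReduced B)
    (h2 : 2 ≤ (redList B).length) (k : ℕ) :
    redList (B ^ k) = (List.replicate k (redList B)).flatten := by
  have hne : redList B ≠ [] := List.ne_nil_of_length_pos (by omega)
  have hcyc := getLast_fst_ne_head_fst B hcr h2 hne
  have hprod : (Monoid.CoprodI.Word.prod
      ⟨(List.replicate k (redList B)).flatten,
       by
         intro l hl
         obtain ⟨L', hL', hl⟩ := List.mem_flatten.mp hl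
         rw [List.eq_of_mem_replicate hL'] at hl
         exact ne_one_redList B l hl,
       chain'_flatten_replicate k hne (chain_redList B) hcyc⟩ : Monoid.CoprodI G) = B ^ k := by
    show ((((List.replicate k (redList B)).flatten).map fun l => Monoid.CoprodI.of l.snd).prod) = B ^ k
    rw [prod_map_flatten_replicate, prod_map_redList]
  rw [← hprod, redList_word_prod]

/-- **Occurrences of a simple word in its powers (Lemma 1, P1).** If `B` is
simple and (a word equal syllable-by-syllable to) `B` occurs as a subword of
`B^k`, then `B^k ≡ B^m ⬝ B ⬝ B^{k-m-1}` for some `m ∈ {0,…,k-1}`: the occurrence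
is at a position that is a multiple of `|B|`. -/
theorem simple_word_occurrence_in_power
    {ι : Type*} [Nontrivial ι] {G : ι → Type*} [∀ i, Group (G i)]
    (hG : ∀ i, Nontrivial (G i))
    (B : Monoid.CoprodI G) (hB : IsSimple B)
    (k : ℕ) (hk : 0 < k)
    (l₁ l₂ : List (Σ i, G i))
    (hocc : redList (B ^ k) = l₁ ++ redList B ++ l₂) :
    ∃ m : ℕ, m < k ∧
      l₁ = (List.replicate m (redList B)).flatten ∧
      l₂ = (List.replicate (k - m - 1) (redList B)).flatten := by
  obtain ⟨hcr, h2, hnp⟩ := hB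
  have hn2 : 2 ≤ (redList B).length := h2
  have hn0 : 0 < (redList B).length := by omega
  have hLne : redList B ≠ [] := List.ne_nil_of_length_pos hn0
  have hflat : (List.replicate k (redList B)).flatten = l₁ ++ redList B ++ l₂ := by
    rw [← redList_pow_s5 B hcr hn2 k]; exact hocc
  have hflat' : (List.replicate k (redList B)).flatten = l₁ ++ (redList B ++ l₂) := by
    rw [hflat, List.append_assoc]
  have hlen : k * (redList B).length =
      l₁.length + (redList B).length + l₂.length := by
    have h := congrArg List.length hflat
    rw [length_flatten_replicate] at h
    simp only [List.length_append] at h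
    omega
  have hqr := Nat.div_add_mod l₁.length (redList B).length
  -- periodicity with period r := l₁.length % n
  have hper : ∀ j (hj : j < (redList B).length),
      (redList B)[j]'hj =
      (redList B)[(j + l₁.length % (redList B).length) % (redList B).length]'(Nat.mod_lt _ hn0) := by
    intro j hj
    have hjk : l₁.length + j < (List.replicate k (redList B)).flatten.length := by
      rw [length_flatten_replicate]; omega
    have e1 := getElem_flatten_replicate k (redList B) (l₁.length + j) hLne hjk
    have e2 : (List.replicate k (redList B)).flatten[l₁.length + j]'hjk =
        (redList B)[j]'hj := by
      rw [List.getElem_of_eq hflat' hjk,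
        List.getElem_append_right (Nat.le_add_right _ _)]
      rw [getElem_idx_congr _ (show l₁.length + j - l₁.length = j by omega)]
      rw [List.getElem_append_left hj]
    rw [← e2, e1]
    exact getElem_idx_congr _ (by rw [Nat.add_mod_mod, Nat.add_comm l₁.length j]) _
  -- iterate the periodicity
  have hper_t : ∀ t j (hj : j < (redList B).length),
      (redList B)[j]'hj =
      (redList B)[(j + t * (l₁.length % (redList B).length)) % (redList B).length]'(Nat.mod_lt _ hn0) := by
    intro t
    induction t with
    | zero =>
      intro j hj
      refine (getElem_idx_congr _ ?_ _).symm
      rw [Nat.zero_mul, Nat.add_zero, Nat.mod_eq_of_lt hj]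
    | succ t ih =>
      intro j hj
      refine (ih j hj).trans ?_
      refine (hper _ (Nat.mod_lt _ hn0)).trans ?_
      refine getElem_idx_congr _ ?_ _
      rw [Nat.mod_add_mod, Nat.succ_mul, ← Nat.add_assoc]
  by_cases hr0 : l₁.length % (redList B).length = 0
  · -- occurrence at a multiple of |B|
    obtain ⟨q', hq'⟩ : (redList B).length ∣ l₁.length := Nat.dvd_of_mod_eq_zero hr0
    have hqk : q' < k := by
      by_contra hcon
      push_neg at hcon
      have h1 : (redList B).length * k ≤ (redList B).length * q' :=
        Nat.mul_le_mul_left _ hcon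
      have h2 : k * (redList B).length = (redList B).length * k := Nat.mul_comm _ _
      omega
    refine ⟨q', hqk, ?_, ?_⟩
    · have h1 : l₁ = (List.replicate k (redList B)).flatten.take (q' * (redList B).length) := by
        rw [hflat', List.take_left'
          (show l₁.length = q' * (redList B).length by rw [hq', Nat.mul_comm])]
      rw [h1, take_flatten_replicate k q' _ hqk.le]
    · have h1 : l₂ = (List.replicate k (redList B)).flatten.drop
          ((q' + 1) * (redList B).length) := by
        rw [hflat, List.drop_left'
          (show (l₁ ++ redList B).length = (q' + 1) * (redList B).length by
            rw [List.length_append, hq']; ring)]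
      rw [h1, drop_flatten_replicate, Nat.sub_sub]
  · -- impossible: B would be a proper power
    exfalso
    set r := l₁.length % (redList B).length with hrdef
    have hr : 0 < r := Nat.pos_of_ne_zero hr0
    have hrn : r < (redList B).length := Nat.mod_lt _ hn0
    obtain ⟨t, ht⟩ := bezout_mod r (redList B).length hr hrn
    set d := Nat.gcd r (redList B).length with hddef
    have hd0 : 0 < d := Nat.gcd_pos_of_pos_left _ hr
    have hdvd : d ∣ (redList B).length := Nat.gcd_dvd_right r _
    have hdlt : d < (redList B).length := lt_of_le_of_lt (Nat.gcd_le_left _ hr) hrn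
    have hdm : d * ((redList B).length / d) = (redList B).length := Nat.mul_div_cancel' hdvd
    have hm2 : 2 ≤ (redList B).length / d := by
      rcases hq2 : (redList B).length / d with _ | _ | m2
      · rw [hq2] at hdm; simp at hdm; omega
      · rw [hq2] at hdm; simp at hdm; omega
      · omega
    have hperd : ∀ j (hj : j < (redList B).length),
        (redList B)[j]'hj = (redList B)[(j + d) % (redList B).length]'(Nat.mod_lt _ hn0) := by
      intro j hj
      refine (hper_t t j hj).trans (getElem_idx_congr _ ?_ _)
      rw [Nat.add_mod, ht, Nat.mod_add_mod]
    have pmod : ∀ j, ∀ (hj : j < (redList B).length),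
        (redList B)[j]'hj = (redList B)[j % d]'(lt_trans (Nat.mod_lt _ hd0) hdlt) := by
      intro j
      induction j using Nat.strong_induction_on with
      | _ j ih =>
        intro hj
        rcases Nat.lt_or_ge j d with h | h
        · exact getElem_idx_congr _ (Nat.mod_eq_of_lt h).symm hj
        · have hjd : j - d < (redList B).length := by omega
          have e3 : (redList B)[j - d]'hjd = (redList B)[j]'hj :=
            (hperd (j - d) hjd).trans
              (getElem_idx_congr _
                (by rw [Nat.sub_add_cancel h, Nat.mod_eq_of_lt hj]) _)
          have e4 := ih (j - d) (by omega) hjd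
          rw [← e3, e4]
          exact getElem_idx_congr _ (Nat.mod_eq_sub_mod h).symm _
    have hpne : (redList B).take d ≠ [] := by
      apply List.ne_nil_of_length_pos
      rw [List.length_take]
      omega
    have hLp : redList B = (List.replicate ((redList B).length / d) ((redList B).take d)).flatten := by
      apply List.ext_getElem
      · rw [length_flatten_replicate, List.length_take, Nat.min_eq_left hdlt.le, Nat.mul_comm]
        omega
      · intro j h1 h2
        rw [getElem_flatten_replicate _ _ j hpne h2, List.getElem_take]
        refine (pmod j h1).trans (getElem_idx_congr _ ?_ _)
        rw [List.length_take, Nat.min_eq_left hdlt.le]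
    refine hnp ⟨Monoid.CoprodI.Word.prod
      ⟨(redList B).take d,
       fun l hl => ne_one_redList B l (List.take_subset _ _ hl),
       (chain_redList B).prefix (List.take_prefix _ _)⟩,
      (redList B).length / d, hm2, ?_⟩
    conv_lhs => rw [← prod_map_redList B, hLp]
    rw [prod_map_flatten_replicate]
    rfl


end FreeProdPaper
end

section
/- Let H = ∗_{a∈A} H_a be a nontrivial free product and let B ∈ H be a simple word. If the word B^{-1} is B-periodic (i.e., B^{-1} occurs as a subword of B^k for some positive integer k), then there exist uniquely determined reduced words C_1, C_2 ∈ H such that B ≡ C_1 · C_2, B^{-1} ≡ C_2 · C_1, and C_1^2 = C_2^2 = 1. -/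
/-!
Common definitions: we model a nontrivial free product `H = ∗_{a ∈ A} H_a` as
`Monoid.CoprodI G` for a family of groups `G : ι → Type*` with `[Nontrivial ι]`
(the index set has at least two elements) and `∀ i, Nontrivial (G i)`
(all factors are nontrivial groups).
-/

namespace FreeProdPaper

open Monoid

variable {ι : Type*} {G : ι → Type*} [∀ i, Group (G i)]

set_option linter.unusedSectionVars false in
theorem _dummy_ : True := trivial

section Infra

open Monoid List

set_option linter.unusedSectionVars false

private theorem gEc {α : Type*} {l : List α} {a b : ℕ} (h : a = b) {ha : a < l.length} :
    l[a]'ha = l[b]'(h ▸ ha) := by subst h; rfl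

/-- `k`-fold repetition of a list. -/
private def repL {α : Type*} : ℕ → List α → List α
  | 0, _ => []
  | k + 1, L => L ++ repL k L

private theorem length_repL {α : Type*} (k : ℕ) (L : List α) :
    (repL k L).length = k * L.length := by
  induction k with
  | zero => simp [repL]
  | succ k ih => simp [repL, ih]; ring

private theorem mem_repL {α : Type*} {k : ℕ} {L : List α} {x : α} (h : x ∈ repL k L) :
    x ∈ L := by
  induction k with
  | zero => simp [repL] at h
  | succ k ih => rcases List.mem_append.1 h with h | h; exact h; exact ih h

private theorem getElem_repL {α : Type*} {k m : ℕ} {L : List α} (h0 : 0 < L.length)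
    (h : m < k * L.length) :
    (repL k L)[m]'(by rw [length_repL]; exact h) = L[m % L.length]'(Nat.mod_lt _ h0) := by
  induction k generalizing m with
  | zero => omega
  | succ k ih =>
    show (L ++ repL k L)[m]'(by rw [List.length_append, length_repL]; rw [Nat.succ_mul] at h; omega) = _
    by_cases hm : m < L.length
    · rw [List.getElem_append_left hm]
      exact gEc (Nat.mod_eq_of_lt hm).symm
    · push_neg at hm
      rw [List.getElem_append_right (by simpa using hm)]
      have h2 : m - L.length < k * L.length := by
        have hs : (k+1) * L.length = k * L.length + L.length := by ring
        omega
      exact (ih h2).trans (gEc (Nat.mod_eq_sub_mod hm).symm)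

private theorem prod_repL {α : Type*} [Monoid α] (k : ℕ) (L : List α) :
    (repL k L).prod = L.prod ^ k := by
  induction k with
  | zero => simp [repL]
  | succ k ih => rw [repL, List.prod_append, ih, pow_succ']

private theorem map_repL {α β : Type*} (f : α → β) (k : ℕ) (L : List α) :
    (repL k L).map f = repL k (L.map f) := by
  induction k with
  | zero => simp [repL]
  | succ k ih => simp [repL, ih]

private theorem chain'_repL {α : Type*} {R : α → α → Prop} {L : List α}
    (hc : L.Chain' R)
    (hlast : ∀ x ∈ L.getLast?, ∀ y ∈ L.head?, R x y) (k : ℕ) :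
    (repL k L).Chain' R ∧ ((repL k L) = [] ∨ (repL k L).head? = L.head?) := by
  induction k with
  | zero => exact ⟨List.isChain_nil, Or.inl rfl⟩
  | succ k ih =>
    constructor
    · refine List.IsChain.append hc ih.1 ?_
      intro x hx y hy
      rcases ih.2 with h | h
      · rw [h] at hy; simp at hy
      · exact hlast x hx y (h ▸ hy)
    · rcases L with _ | ⟨a, L'⟩
      · simpa [repL] using ih.2
      · right; rfl

private theorem chain'_of_cyc {α : Type*} {R : α → α → Prop} {L : List α}
    (hcyc : ∀ m (hm : m < L.length),
      R (L[m]'hm) (L[(m+1) % L.length]'(Nat.mod_lt _ (by omega)))) :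
    L.Chain' R := by
  show List.IsChain R L
  rw [List.isChain_iff_getElem]
  intro i h
  have h1 : i < L.length := by omega
  have h2 := hcyc i h1
  rw [gEc (Nat.mod_eq_of_lt (by omega))] at h2
  simpa [List.get_eq_getElem] using h2

private theorem last_head_of_cyc {α : Type*} {R : α → α → Prop} {L : List α}
    (hcyc : ∀ m (hm : m < L.length),
      R (L[m]'hm) (L[(m+1) % L.length]'(Nat.mod_lt _ (by omega)))) :
    ∀ x ∈ L.getLast?, ∀ y ∈ L.head?, R x y := by
  intro x hx y hy
  rcases List.eq_nil_or_concat L with rfl | ⟨L', b, rfl⟩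
  · simp at hx
  simp only [List.concat_eq_append] at hcyc hx hy
  have hne : L' ++ [b] ≠ [] := by simp
  have hlen : 0 < (L' ++ [b]).length := by simp
  rw [List.getLast?_eq_getElem?] at hx
  rw [List.head?_eq_head hne] at hy
  have hx' : x = (L' ++ [b])[(L' ++ [b]).length - 1]'(by omega) := by
    rw [List.getElem?_eq_getElem (by omega)] at hx
    exact (Option.some_inj.1 hx).symm
  have hy' : y = (L' ++ [b])[0]'(by omega) := by
    rw [← List.getElem_zero hlen] at hy
    exact (Option.some_inj.1 hy).symm
  subst hx' hy'
  have h2 := hcyc ((L' ++ [b]).length - 1) (by omega)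
  rwa [gEc (show ((L' ++ [b]).length - 1 + 1) % (L' ++ [b]).length = 0 by
    have : (L' ++ [b]).length - 1 + 1 = (L' ++ [b]).length := by omega
    rw [this, Nat.mod_self])] at h2

private theorem rotate_fix_mul {α : Type*} {L : List α} {a : ℕ} (h : L.rotate a = L) :
    ∀ t, L.rotate (t * a) = L
  | 0 => by simp
  | t+1 => by
    rw [Nat.succ_mul, ← List.rotate_rotate, rotate_fix_mul h t, h]

private theorem rotate_eq_self_of_mod_zero {α : Type*} {M : List α} {c : ℕ}
    (h : c % M.length = 0) : M.rotate c = M := by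
  rw [← List.rotate_mod, h, List.rotate_zero]

private theorem rotate_cancel {α : Type*} {L L' : List α} {a : ℕ}
    (hlen : L.length = L'.length) (h : L.rotate a = L'.rotate a) : L = L' := by
  rcases Nat.eq_zero_or_pos L.length with h0 | h0
  · have hL : L = [] := List.length_eq_zero_iff.1 h0
    have hL' : L' = [] := List.length_eq_zero_iff.1 (by omega)
    rw [hL, hL']
  · have key : ∀ M : List α, M.length = L.length → (M.rotate a).rotate (L.length - a % L.length) = M := by
      intro M hM
      rw [List.rotate_rotate]
      apply rotate_eq_self_of_mod_zero
      rw [hM]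
      have h1 : a % L.length < L.length := Nat.mod_lt _ h0
      obtain ⟨q, hq⟩ : ∃ q, a = q * L.length + a % L.length :=
        ⟨a / L.length, by
          have hd := Nat.div_add_mod a L.length
          rw [Nat.mul_comm] at hd; omega⟩
      have h2 : a + (L.length - a % L.length) = (q + 1) * L.length := by
        rw [Nat.add_mul, Nat.one_mul]; omega
      rw [h2, Nat.mul_mod_left]
    have := key L rfl
    rw [h, key L' hlen.symm] at this
    exact this.symm

private theorem rotate_gcd {α : Type*} {L : List α} :
    ∀ (a b : ℕ), L.rotate a = L → L.rotate b = L → L.rotate (Nat.gcd a b) = L := by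
  intro a
  induction a using Nat.strong_induction_on with
  | _ a ih =>
    intro b ha hb
    rcases Nat.eq_zero_or_pos a with rfl | ha0
    · simpa [Nat.gcd_zero_left] using hb
    · rw [Nat.gcd_rec a b]
      have hfix : L.rotate ((b / a) * a) = L := rotate_fix_mul ha _
      have h2 : (L.rotate (b % a)).rotate ((b / a) * a) = L := by
        rw [List.rotate_rotate,
          show b % a + (b / a) * a = b by rw [Nat.mul_comm]; exact Nat.mod_add_div b a]
        exact hb
      have hmod : L.rotate (b % a) = L :=
        rotate_cancel (by simp [List.length_rotate]) (h2.trans hfix.symm)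
      exact ih (b % a) (Nat.mod_lt _ ha0) a hmod ha

private theorem getElem_mod_period {α : Type*} {L : List α} {g : ℕ} (hg0 : 0 < g)
    (hper : ∀ j (hj : j < L.length),
      L[(j + g) % L.length]'(Nat.mod_lt _ (by omega)) = L[j]'hj) :
    ∀ m (hm : m < L.length),
      L[m]'hm = L[m % g]'(by have := Nat.mod_le m g; omega) := by
  intro m
  induction m using Nat.strong_induction_on with
  | _ m ih =>
    intro hm
    by_cases hmg : m < g
    · exact gEc (Nat.mod_eq_of_lt hmg).symm
    · push_neg at hmg
      have h1 : m - g < L.length := by omega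
      have h2 := hper (m - g) h1
      rw [gEc (show (m - g + g) % L.length = m by
        rw [Nat.sub_add_cancel hmg]; exact Nat.mod_eq_of_lt hm)] at h2
      exact h2.trans ((ih (m - g) (by omega) h1).trans
        (gEc (Nat.mod_eq_sub_mod hmg).symm))

private theorem eq_repL_of_rotate {α : Type*} {L : List α} {g : ℕ} (hg0 : 0 < g)
    (hgn : g ≤ L.length) (hgdvd : g ∣ L.length) (hrot : L.rotate g = L) :
    L = repL (L.length / g) (L.take g) := by
  have hn0 : 0 < L.length := by omega
  have htl : (L.take g).length = g := by simp [hgn]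
  have hper : ∀ j (hj : j < L.length),
      L[(j + g) % L.length]'(Nat.mod_lt _ (by omega)) = L[j]'hj := by
    intro j hj
    have h1 : (L.rotate g)[j]? = L[(j + g) % L.length]? := by
      rw [List.getElem?_rotate (by simpa using hj)]
    rw [hrot] at h1
    rw [List.getElem?_eq_getElem hj, List.getElem?_eq_getElem (Nat.mod_lt _ hn0)] at h1
    exact (Option.some_inj.1 h1).symm
  apply List.ext_getElem
  · rw [length_repL, htl, Nat.div_mul_cancel hgdvd]
  · intro m hm hm2
    have hmm : m < L.length / g * (L.take g).length := by
      rw [htl, Nat.div_mul_cancel hgdvd]; exact hm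
    rw [getElem_repL (by omega) hmm]
    have : (L.take g)[m % (L.take g).length]'(Nat.mod_lt _ (by omega)) =
        L[m % g]'(by have := Nat.mod_le m g; omega) := by
      rw [gEc (show m % (L.take g).length = m % g by rw [htl])]
      exact List.getElem_take
    rw [this]
    exact getElem_mod_period hg0 hper m hm

private theorem mod_idx0 {n r p m : ℕ} (hr : r % n = p) (h : p + m < n) :
    (r + m) % n = p + m := by
  have hn : 0 < n := by omega
  obtain ⟨q, hq⟩ : ∃ q, r = n * q + p :=
    ⟨r / n, by have := Nat.div_add_mod r n; omega⟩
  rw [hq, show n * q + p + m = (p + m) + q * n by ring, Nat.add_mul_mod_self_right,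
    Nat.mod_eq_of_lt h]

variable {ι : Type*} [DecidableEq ι] {G : ι → Type*} [∀ i, Group (G i)]
  [∀ i, DecidableEq (G i)]

noncomputable def rl (w : CoprodI G) : List (Σ i, G i) :=
  (CoprodI.Word.equiv w).toList

theorem rl_ne_one (w : CoprodI G) : ∀ l ∈ rl w, Sigma.snd l ≠ 1 :=
  (CoprodI.Word.equiv w).ne_one

theorem rl_chain (w : CoprodI G) :
    (rl w).Chain' fun a b => a.1 ≠ b.1 :=
  (CoprodI.Word.equiv w).chain_ne

theorem rl_eq {w : CoprodI G} {L : List (Σ i, G i)} (h1 : ∀ l ∈ L, Sigma.snd l ≠ 1)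
    (h2 : L.Chain' fun a b => a.1 ≠ b.1)
    (hp : (L.map fun l => CoprodI.of l.2).prod = w) : rl w = L := by
  have h : CoprodI.Word.equiv (M := G) w = ⟨L, h1, h2⟩ := by
    rw [← hp]
    exact (CoprodI.Word.equiv (M := G)).apply_symm_apply ⟨L, h1, h2⟩
  rw [rl, h]

theorem prod_rl (w : CoprodI G) : ((rl w).map fun l => CoprodI.of l.2).prod = w :=
  (CoprodI.Word.equiv (M := G)).symm_apply_apply w

theorem rl_injective {w w' : CoprodI G} (h : rl w = rl w') : w = w' := by
  rw [← prod_rl w, ← prod_rl w', h]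

theorem rl_one : rl (1 : CoprodI G) = [] :=
  rl_eq (by simp) List.isChain_nil (by simp)

private def invRev (L : List ((i : ι) × G i)) : List ((i : ι) × G i) :=
  (L.map fun l => ⟨l.1, l.2⁻¹⟩).reverse

private theorem length_invRev (L : List ((i : ι) × G i)) :
    (invRev L).length = L.length := by simp [invRev]

private theorem getElem_invRev (L : List ((i : ι) × G i)) {m : ℕ} (hm : m < L.length) :
    (invRev L)[m]'(by rw [length_invRev]; exact hm) =
      ⟨(L[L.length - 1 - m]'(by omega)).1, (L[L.length - 1 - m]'(by omega)).2⁻¹⟩ := by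
  simp only [invRev]
  rw [List.getElem_reverse]
  simp only [List.getElem_map, List.length_map]

private theorem invRev_prod (L : List ((i : ι) × G i)) :
    ((invRev L).map fun l => CoprodI.of l.2).prod =
      ((L.map fun l => CoprodI.of l.2).prod)⁻¹ := by
  rw [List.prod_inv_reverse]
  simp [invRev, List.map_reverse, List.map_map, Function.comp_def]

theorem rl_inv (w : CoprodI G) : rl w⁻¹ = invRev (rl w) := by
  refine rl_eq ?_ ?_ ?_
  · intro l hl
    simp only [invRev, List.mem_reverse, List.mem_map] at hl
    obtain ⟨x, hx, rfl⟩ := hl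
    simpa using rl_ne_one w x hx
  · rw [invRev]; show List.IsChain _ _; rw [List.isChain_reverse]
    refine (List.isChain_map _).2 ?_
    exact List.IsChain.imp (fun a b h => h.symm) (rl_chain w)
  · rw [invRev_prod, prod_rl]

theorem rl_pow {w : CoprodI G}
    (hcyc : ∀ m (hm : m < (rl w).length),
      ((rl w)[m]'hm).1 ≠ ((rl w)[(m+1) % (rl w).length]'(Nat.mod_lt _ (by omega))).1)
    (k : ℕ) : rl (w ^ k) = repL k (rl w) := by
  refine rl_eq (fun l hl => rl_ne_one w l (mem_repL hl)) ?_ ?_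
  · exact (chain'_repL (chain'_of_cyc hcyc) (last_head_of_cyc hcyc) k).1
  · rw [map_repL, prod_repL, prod_rl]

end Infra


set_option maxHeartbeats 2000000 in
/-- **(Lemma 1, P3).** If `B` is simple and `B⁻¹` is `B`-periodic (a subword of
some power `B^k`), then there are unique reduced words `C₁, C₂` with
`B ≡ C₁ ⬝ C₂`, `B⁻¹ ≡ C₂ ⬝ C₁` and `C₁² = C₂² = 1`. -/
theorem inverse_B_periodic
    {ι : Type*} [Nontrivial ι] {G : ι → Type*} [∀ i, Group (G i)]
    (hG : ∀ i, Nontrivial (G i))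
    (B : Monoid.CoprodI G) (hB : IsSimple B)
    (hper : ∃ k : ℕ, 0 < k ∧ IsSubword B⁻¹ (B ^ k)) :
    ∃! p : Monoid.CoprodI G × Monoid.CoprodI G,
      redList B = redList p.1 ++ redList p.2 ∧
      redList B⁻¹ = redList p.2 ++ redList p.1 ∧
      p.1 ^ 2 = 1 ∧ p.2 ^ 2 = 1 := by
  letI : DecidableEq ι := Classical.decEq ι
  letI : ∀ i, DecidableEq (G i) := fun _ => Classical.decEq _
  have hrd : ∀ w : CoprodI G, redList w = rl w := fun _ => rfl
  set L := rl B with hL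
  set n := L.length with hn
  have hlen2 : 2 ≤ n := by
    have h := hB.2.1
    simpa [len, hrd] using h
  have hn0 : 0 < n := by omega
  have hmlt : ∀ x : ℕ, x % n < L.length := fun x =>
    lt_of_lt_of_le (Nat.mod_lt x hn0) (le_of_eq hn)
  -- the minimality of conjugates
  have hmin : ∀ g : CoprodI G, n ≤ (rl (g⁻¹ * B * g)).length := by
    intro g
    have h1 : len B = cyclicLength B := hB.1.2
    have h2 : cyclicLength B ≤ len (g⁻¹ * B * g) := Nat.sInf_le ⟨g, rfl⟩
    have h3 : len (g⁻¹ * B * g) = (rl (g⁻¹ * B * g)).length := by rw [len, hrd]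
    have h4 : len B = n := by rw [len, hrd, ← hL]
    omega
  -- first and last syllables lie in distinct factors
  have hlast : (L[n-1]'(by omega)).1 ≠ (L[0]'(by omega)).1 := by
    intro hEq
    obtain ⟨a, t, hLat⟩ : ∃ a t, L = a :: t := by
      cases hLL : L with
      | nil => rw [hLL] at hn; simp at hn; omega
      | cons a t => exact ⟨a, t, rfl⟩
    have ht : t ≠ [] := by
      intro h0
      rw [h0] at hLat
      rw [hLat] at hn; simp at hn; omega
    obtain ⟨mid, b, hmid⟩ : ∃ mid b, t = mid ++ [b] :=
      ⟨t.dropLast, t.getLast ht, (List.dropLast_append_getLast ht).symm⟩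
    have hLdec : L = a :: (mid ++ [b]) := by rw [hLat, hmid]
    have hnval : n = mid.length + 2 := by rw [hn, hLdec]; simp
    have ha : L[0]'(by omega) = a := by
      rw [List.getElem_of_eq hLdec]; rfl
    have hbv : L[n-1]'(by omega) = b := by
      have hLdec2 : L = (a :: mid) ++ [b] := by rw [hLdec]; rfl
      rw [List.getElem_of_eq hLdec2]
      rw [List.getElem_append_right (by simp; omega)]
      simp [hnval]
    rw [ha, hbv] at hEq
    obtain ⟨i, x⟩ := a
    obtain ⟨i', y⟩ := b
    simp only at hEq
    subst hEq
    -- B = of x * (P * of y)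
    have hBdec : B = CoprodI.of x * (((mid.map fun l => CoprodI.of l.2).prod) * CoprodI.of y) := by
      have h := prod_rl B
      rw [← hL, hLdec] at h
      rw [← h]
      simp [List.map_append, List.prod_append, mul_assoc]
    have hch2 : (mid ++ [(⟨i', y⟩ : (i : ι) × G i)]).Chain' fun a b => a.1 ≠ b.1 := by
      have h := rl_chain B
      rw [← hL, hLdec] at h
      exact List.IsChain.tail h
    have hchmid : mid.Chain' fun a b => a.1 ≠ b.1 := (List.isChain_append.1 hch2).1
    have hmidlast : ∀ u ∈ mid.getLast?, u.1 ≠ i' := by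
      intro u hu
      have h := (List.isChain_append.1 hch2).2.2 u hu ⟨i', y⟩ rfl
      exact h
    have hmidmem : ∀ l ∈ mid, Sigma.snd l ≠ 1 := by
      intro l hl
      refine rl_ne_one B l ?_
      rw [← hL, hLdec]
      simp [hl]
    have hconj : (CoprodI.of x)⁻¹ * B * CoprodI.of x =
        ((mid.map fun l => CoprodI.of l.2).prod) * CoprodI.of (y * x) := by
      rw [hBdec, map_mul]
      group
    by_cases hyx : y * x = 1
    · have hrlconj : rl ((CoprodI.of x)⁻¹ * B * CoprodI.of x) = mid := by
        refine rl_eq hmidmem hchmid ?_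
        rw [hconj, hyx, map_one, mul_one]
      have := hmin (CoprodI.of x)
      rw [hrlconj] at this
      omega
    · have hrlconj : rl ((CoprodI.of x)⁻¹ * B * CoprodI.of x) =
          mid ++ [(⟨i', y * x⟩ : (i : ι) × G i)] := by
        refine rl_eq ?_ ?_ ?_
        · intro l hl
          rcases List.mem_append.1 hl with h | h
          · exact hmidmem l h
          · simp at h; rw [h]; exact hyx
        · refine List.IsChain.append hchmid (List.isChain_singleton _) ?_
          intro u hu v hv
          simp at hv
          rw [← hv]
          exact hmidlast u hu
        · rw [hconj]
          simp [List.map_append, List.prod_append]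
      have := hmin (CoprodI.of x)
      rw [hrlconj] at this
      simp at this
      omega
  -- cyclic alternation
  have hcyc : ∀ m (hm : m < L.length),
      (L[m]'hm).1 ≠ (L[(m+1) % L.length]'(Nat.mod_lt _ (by omega))).1 := by
    intro m hm
    rcases Nat.lt_or_ge (m+1) n with h | h
    · have h1 := List.isChain_iff_getElem.1 (rl_chain B) m (by rw [← hL]; omega)
      rw [gEc (show (m+1) % L.length = m+1 from Nat.mod_eq_of_lt (by omega))]
      have h2 : ∀ (hx : m < (rl B).length) (hy : m+1 < (rl B).length),
          ((rl B)[m]'hx).1 ≠ ((rl B)[m+1]'hy).1 := fun _ _ => h1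
      exact h2 (by rw [← hL]; omega) (by rw [← hL]; omega)
    · have hm1 : m = n - 1 := by omega
      have e0 : (m+1) % L.length = 0 := by
        rw [← hn, show m + 1 = n by omega, Nat.mod_self]
      rw [gEc e0, gEc (show m = n - 1 by omega)]
      exact hlast
  -- powers and the inverse
  have hpow : ∀ k, rl (B ^ k) = repL k L := rl_pow hcyc
  have hMdef : rl B⁻¹ = invRev L := by rw [rl_inv, ← hL]
  have hMlen : (invRev L).length = n := by rw [length_invRev, hn]
  have hB2 : rl B⁻¹ ≠ rl B := by
    intro hBB
    have hBinv : B⁻¹ = B := rl_injective hBB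
    have hone : B ^ 2 = 1 := by
      rw [pow_two]
      have h := inv_mul_cancel B
      rw [hBinv] at h
      exact h
    have hcon : rl (B ^ 2) = repL 2 L := hpow 2
    rw [hone, rl_one] at hcon
    have hlenc := congrArg List.length hcon
    rw [length_repL] at hlenc
    simp only [List.length_nil] at hlenc
    omega
  -- unpack the subword hypothesis
  obtain ⟨k, hk0, l₁, l₂, hsubw⟩ := hper
  rw [hrd, hrd] at hsubw
  set r := l₁.length with hr
  have hsub2 : repL k L = l₁ ++ (invRev L ++ l₂) := by
    rw [← hpow k, hsubw, hMdef, List.append_assoc]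
  have hlensub : k * n = r + (n + l₂.length) := by
    have h := congrArg List.length hsub2
    rw [length_repL] at h
    simp only [List.length_append] at h
    rw [hMlen, ← hn] at h
    exact h
  have hkey : ∀ j (hj : j < n), (invRev L)[j]'(by omega) = L[(r+j) % n]'(hmlt _) := by
    intro j hj
    have hb1 : r + j < k * n := by omega
    have e1 : (repL k L)[r+j]'(by rw [length_repL]; exact hb1) = L[(r+j) % L.length]'(Nat.mod_lt _ (by omega)) :=
      getElem_repL (by omega) (by rw [← hn]; exact hb1)
    have e2 : (repL k L)[r+j]'(by rw [length_repL]; exact hb1) = (invRev L)[j]'(by omega) := by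
      rw [List.getElem_of_eq hsub2]
      rw [List.getElem_append_right (by omega)]
      rw [gEc (show r + j - l₁.length = j by omega)]
      rw [List.getElem_append_left (by omega)]
    exact e2.symm.trans e1
  have hrel : ∀ m (hm : m < n),
      (⟨(L[m]'(by omega)).1, (L[m]'(by omega)).2⁻¹⟩ : (i : ι) × G i) =
        L[(r + (n-1-m)) % n]'(hmlt _) := by
    intro m hm
    have h1 := hkey (n-1-m) (by omega)
    have h2 := getElem_invRev L (show n-1-m < L.length by omega)
    rw [gEc (show L.length - 1 - (n-1-m) = m by omega)] at h2
    exact h2.symm.trans h1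
  set p := r % n with hp
  have hplt : p < n := by rw [hp]; exact Nat.mod_lt _ hn0
  have hp0 : p ≠ 0 := by
    intro hp'
    apply hB2
    rw [hMdef, ← hL]
    apply List.ext_getElem (by rw [length_invRev])
    intro j h1 h2
    refine (hkey j (by omega)).trans (gEc ?_)
    have := mod_idx0 (n := n) (r := r) (p := 0) (m := j) (by omega) (by omega)
    omega
  -- the rotation identity
  have hrotP : invRev L = L.rotate p := by
    apply List.ext_getElem (by rw [length_invRev, List.length_rotate])
    intro j h1 h2
    have hjn : j < n := by rw [length_invRev] at h1; omega
    have e2 := List.getElem_rotate L p j h2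
    refine (hkey j hjn).trans ((gEc ?_).trans e2.symm)
    rw [Nat.add_comm j p, hp, Nat.mod_add_mod]
  -- reduced forms of the two candidate halves
  have hrlC1 : rl (((L.take p).map fun l => CoprodI.of l.2).prod) = L.take p := by
    refine rl_eq ?_ ?_ rfl
    · intro l hl
      refine rl_ne_one B l ?_
      have h2 := List.take_subset p L hl
      rwa [hL] at h2
    · exact List.IsChain.take (rl_chain B) p
  have hrlC2 : rl (((L.drop p).map fun l => CoprodI.of l.2).prod) = L.drop p := by
    refine rl_eq ?_ ?_ rfl
    · intro l hl
      refine rl_ne_one B l ?_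
      have h2 := List.drop_subset p L hl
      rwa [hL] at h2
    · exact List.IsChain.drop (rl_chain B) p
  -- the four conditions
  have hcond1 : redList B = redList (((L.take p).map fun l => CoprodI.of l.2).prod) ++
      redList (((L.drop p).map fun l => CoprodI.of l.2).prod) := by
    simp only [hrd]
    rw [hrlC1, hrlC2, List.take_append_drop, ← hL]
  have hcond2 : redList B⁻¹ = redList (((L.drop p).map fun l => CoprodI.of l.2).prod) ++
      redList (((L.take p).map fun l => CoprodI.of l.2).prod) := by
    simp only [hrd]
    rw [hrlC1, hrlC2, hMdef, hrotP, List.rotate_eq_drop_append_take (by omega)]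
  have hq : ∃ q, r = q * n + p := ⟨r / n, by
    have hd := Nat.div_add_mod r n
    rw [Nat.mul_comm] at hd
    omega⟩
  have hsq1 : (((L.take p).map fun l => CoprodI.of l.2).prod) ^ 2 = 1 := by
    have hinv : rl ((((L.take p).map fun l => CoprodI.of l.2).prod)⁻¹) =
        rl (((L.take p).map fun l => CoprodI.of l.2).prod) := by
      rw [rl_inv, hrlC1]
      have hTlen : (L.take p).length = p := by rw [List.length_take]; omega
      apply List.ext_getElem (by rw [length_invRev])
      intro m h1 h2
      have hm : m < p := by omega
      have e1 := getElem_invRev (L.take p) (show m < (L.take p).length from h2)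
      have e2 : (L.take p)[(L.take p).length - 1 - m]'(by omega) = L[p - 1 - m]'(by omega) := by
        rw [gEc (show (L.take p).length - 1 - m = p - 1 - m by omega)]
        exact List.getElem_take
      rw [e2] at e1
      have e3 := hrel (p-1-m) (by omega)
      have eidx : (r + (n - 1 - (p - 1 - m))) % n = m := by
        obtain ⟨q, hqq⟩ := hq
        rw [hqq, show q * n + p + (n - 1 - (p - 1 - m)) = (m + n) + q * n by omega,
          Nat.add_mul_mod_self_right, Nat.add_mod_right, Nat.mod_eq_of_lt (by omega)]
      have e4 : (L.take p)[m]'h2 = L[m]'(by omega) := List.getElem_take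
      exact e1.trans (e3.trans ((gEc eidx).trans e4.symm))
    have hinv' := rl_injective hinv
    rw [pow_two]
    nth_rewrite 1 [← hinv']
    exact inv_mul_cancel _
  have hsq2 : (((L.drop p).map fun l => CoprodI.of l.2).prod) ^ 2 = 1 := by
    have hinv : rl ((((L.drop p).map fun l => CoprodI.of l.2).prod)⁻¹) =
        rl (((L.drop p).map fun l => CoprodI.of l.2).prod) := by
      rw [rl_inv, hrlC2]
      have hTlen : (L.drop p).length = n - p := by rw [List.length_drop, ← hn]
      apply List.ext_getElem (by rw [length_invRev])
      intro m h1 h2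
      have hm : m < n - p := by omega
      have e1 := getElem_invRev (L.drop p) (show m < (L.drop p).length from h2)
      have e2 : (L.drop p)[(L.drop p).length - 1 - m]'(by omega) = L[n - 1 - m]'(by omega) := by
        rw [gEc (show (L.drop p).length - 1 - m = n - p - 1 - m by omega)]
        exact List.getElem_drop.trans (gEc (by omega))
      rw [e2] at e1
      have e3 := hrel (n-1-m) (by omega)
      have eidx : (r + (n - 1 - (n - 1 - m))) % n = p + m := by
        rw [show n - 1 - (n - 1 - m) = m by omega]
        exact mod_idx0 hp.symm (by omega)
      have e4 : (L.drop p)[m]'h2 = L[p + m]'(by omega) := List.getElem_drop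
      exact e1.trans (e3.trans ((gEc eidx).trans e4.symm))
    have hinv' := rl_injective hinv
    rw [pow_two]
    nth_rewrite 1 [← hinv']
    exact inv_mul_cancel _
  refine ⟨(((L.take p).map fun l => CoprodI.of l.2).prod,
           ((L.drop p).map fun l => CoprodI.of l.2).prod),
    ⟨hcond1, hcond2, hsq1, hsq2⟩, ?_⟩
  -- uniqueness
  rintro ⟨D₁, D₂⟩ ⟨u1, u2, _, _⟩
  simp only [hrd] at u1 u2
  rw [← hL] at u1
  set q := (rl D₁).length with hqd
  have hqle : q ≤ n := by
    have h := congrArg List.length u1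
    simp only [List.length_append] at h
    omega
  have hD1 : rl D₁ = L.take q := by
    have h := List.take_left' (l₂ := rl D₂) hqd.symm
    rw [← u1] at h
    exact h.symm
  have hD2 : rl D₂ = L.drop q := by
    have h := List.drop_left' (l₂ := rl D₂) hqd.symm
    rw [← u1] at h
    exact h.symm
  have hrotQ : invRev L = L.drop q ++ L.take q := by
    rw [← hMdef, u2, hD1, hD2]
  have hq0 : q ≠ 0 := by
    intro h0
    apply hB2
    rw [hMdef, hrotQ, h0, ← hL]
    simp
  have hqn : q ≠ n := by
    intro h0
    apply hB2
    rw [hMdef, hrotQ, h0, ← hL, hn]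
    simp
  have hqp : q = p := by
    by_contra hne
    have h1 : L.rotate q = L.rotate p := by
      rw [List.rotate_eq_drop_append_take (show q ≤ L.length by omega), ← hrotQ, hrotP]
    have hrn : L.rotate n = L := by rw [hn]; exact List.rotate_length L
    have h2 : L.rotate (q + (n - p)) = L := by
      rw [← List.rotate_rotate, h1, List.rotate_rotate, show p + (n - p) = n by omega]
      exact hrn
    have hd0 : 0 < q + (n - p) := by omega
    have hg0 : 0 < Nat.gcd (q + (n - p)) n := Nat.gcd_pos_of_pos_left _ hd0
    have hgdvdn : Nat.gcd (q + (n - p)) n ∣ n := Nat.gcd_dvd_right _ _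
    have hgdvdd : Nat.gcd (q + (n - p)) n ∣ (q + (n - p)) := Nat.gcd_dvd_left _ _
    have hrotg : L.rotate (Nat.gcd (q + (n - p)) n) = L := rotate_gcd _ n h2 hrn
    set g := Nat.gcd (q + (n - p)) n with hg
    have hgn : g < n := by
      rcases lt_or_eq_of_le (Nat.le_of_dvd hn0 hgdvdn) with h | h
      · exact h
      · exfalso
        rw [h] at hgdvdd
        obtain ⟨c, hc⟩ := hgdvdd
        rcases c with _ | _ | c
        · simp at hc; omega
        · simp at hc; exact hne (by omega)
        · have h2n : n * 2 ≤ n * (c + 1 + 1) := Nat.mul_le_mul_left n (by omega)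
          omega
    have hrep : L = repL (n / g) (L.take g) := by
      have h := eq_repL_of_rotate hg0 (by omega) (by rw [← hn]; exact hgdvdn) hrotg
      rw [← hn] at h
      exact h
    refine absurd ?_ hB.2.2
    refine ⟨((L.take g).map fun l => CoprodI.of l.2).prod, n / g, ?_, ?_⟩
    · by_contra hlt
      push_neg at hlt
      have h5 : n / g * g = n := Nat.div_mul_cancel hgdvdn
      have h6 : n / g * g ≤ 1 * g := Nat.mul_le_mul_right g (by omega)
      rw [one_mul] at h6
      omega
    · have hB' : ((L.map fun l => CoprodI.of l.2).prod) = B := by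
        rw [hL]; exact prod_rl B
      rw [← hB']
      conv_lhs => rw [hrep]
      rw [map_repL, prod_repL]
  have e1 : D₁ = ((L.take p).map fun l => CoprodI.of l.2).prod :=
    rl_injective (by rw [hD1, hqp, hrlC1])
  have e2 : D₂ = ((L.drop p).map fun l => CoprodI.of l.2).prod :=
    rl_injective (by rw [hD2, hqp, hrlC2])
  exact Prod.ext e1 e2


end FreeProdPaper
end
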